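/- arXiv:1109.4986 — 4 statements merged into one kernel-verified Lean document; each statement's English description precedes it below -/
import Mathlib

section
/- Suppose m ≥ 2 and g is odd with g ≥ 2m+3. Let ρ assign weight −1 to each of ω_0,…,ω_{g−2} and weight g−1 to η. Then every monomial basis of U_m has ρ-weight at least (g−1)·((m−1)(g−1) − (2m²−2m+1)), which is at least (g−1)(2m−3) > 0. (The 'only if' direction of Theorem 6.1: the m-th Hilbert point of the canonically embedded rosary of odd genus is non-semistable when g ≥ 2m+3.) -/
/-!
The 'only if' direction of Theorem 6.1: for the canonically embedded rosary of odd
genus `g ≥ 2m+3` (`m ≥ 2`), with the weight vector `ρ` assigning `-1` to each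
`ω₀,…,ω_{g-2}` and `g-1` to `η`, every monomial basis of `U_m` has ρ-weight at least
`(g-1)·((m-1)(g-1) − (2m²−2m+1))`, which is at least `(g-1)(2m-3) > 0`.
-/

noncomputable section

/-- The product ring `P = ∏_{i ∈ ℤ/(g-1)} ℂ(u)`. -/
abbrev Pro (g : ℕ) : Type := ZMod (g - 1) → RatFunc ℂ

/-- `ω_i := e_i + u^(-2)·e_(i+1)`. -/
def omegaR (g : ℕ) (i : ZMod (g - 1)) : Pro g :=
  Pi.single i 1 + Pi.single (i + 1) (RatFunc.X ^ (-2 : ℤ))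

/-- `η := Σ_i u^(-1)·e_i`, i.e. the constant tuple `u^(-1)`. -/
def etaR (g : ℕ) : Pro g := fun _ => RatFunc.X ^ (-1 : ℤ)

/-- Index type for the `g` canonical variables `ω₀,…,ω_{g-2}, η`. -/
abbrev CIdx (g : ℕ) : Type := ZMod (g - 1) ⊕ Unit

/-- The canonical variables. -/
def varC (g : ℕ) : CIdx g → Pro g :=
  Sum.elim (omegaR g) (fun _ => etaR g)

/-- `U_m`: the `ℂ`-span of all degree-`m` monomials in `ω₀,…,ω_{g-2}, η`. -/
def UC (g m : ℕ) : Submodule ℂ (Pro g) :=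
  Submodule.span ℂ
    {p : Pro g | ∃ σ : Multiset (CIdx g), Multiset.card σ = m ∧ p = (σ.map (varC g)).prod}

/-- Degree-`m` canonical monomials, as multisets of `m` variable indices. -/
abbrev CMon (g m : ℕ) := Sym (CIdx g) m

/-- A finite set of degree-`m` canonical monomials is a monomial basis of `U_m` if its
images in `P` are linearly independent over `ℂ` and span `U_m`. -/
def IsMonBasisC (g m : ℕ) (S : Finset (CMon g m)) : Prop :=
  LinearIndependent ℂ (fun s : S => (((s : CMon g m)).1.map (varC g)).prod) ∧
  Submodule.span ℂ ((fun s : CMon g m => (s.1.map (varC g)).prod) '' S) = UC g m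

/-- The destabilizing weight vector: `-1` on each `ω_i` and `g-1` on `η`. -/
def rhoDest (g : ℕ) : CIdx g → ℤ :=
  Sum.elim (fun _ => -1) (fun _ => (g : ℤ) - 1)

attribute [local instance] Classical.propDecidable

-- ## coefficient functionals

def cR (e : ℤ) : RatFunc ℂ →ₗ[ℂ] ℂ where
  toFun q := ((q : LaurentSeries ℂ)).coeff e
  map_add' p q := by simp
  map_smul' c p := by
    have hc : ((algebraMap ℂ (RatFunc ℂ) c : RatFunc ℂ) : LaurentSeries ℂ) = HahnSeries.C c := by
      rw [IsScalarTower.algebraMap_apply ℂ (Polynomial ℂ) (RatFunc ℂ), Polynomial.algebraMap_apply,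
        Algebra.algebraMap_self, RingHom.id_apply]
      have := RatFunc.coe_coe (Polynomial.C c)
      rw [Polynomial.coe_C, PowerSeries.coe_C] at this
      exact this.symm
    rw [Algebra.smul_def, map_mul, hc, HahnSeries.C_mul_eq_smul]
    simp

lemma coe_X_zpow (z : ℤ) : ((RatFunc.X ^ z : RatFunc ℂ) : LaurentSeries ℂ) = HahnSeries.single z 1 := by
  rw [map_zpow₀, RatFunc.coe_X,
    ← RatFunc.single_zpow]

lemma cR_X (e z : ℤ) : cR e (RatFunc.X ^ z) = if e = z then 1 else 0 := by
  show ((RatFunc.X ^ z : RatFunc ℂ) : LaurentSeries ℂ).coeff e = _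
  rw [coe_X_zpow, HahnSeries.coeff_single]
  split_ifs <;> rfl

def cF (g : ℕ) (i : ZMod (g - 1)) (e : ℕ) : Pro g →ₗ[ℂ] ℂ :=
  (cR (-(e : ℤ))).comp (LinearMap.proj i)

lemma cF_apply (g : ℕ) (i : ZMod (g - 1)) (e : ℕ) (p : Pro g) :
    cF g i e p = cR (-(e : ℤ)) (p i) := rfl

-- ## component formula for monomials

def condR (g : ℕ) (i : ZMod (g - 1)) (σ : Multiset (CIdx g)) : Prop :=
  ∀ x ∈ σ, x = Sum.inl (i - 1) ∨ x = Sum.inl i ∨ x = Sum.inr ()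

def texp (g : ℕ) (i : ZMod (g - 1)) (σ : Multiset (CIdx g)) : ℕ :=
  2 * σ.count (Sum.inl (i - 1)) + σ.count (Sum.inr ())

lemma condR_cons (g : ℕ) (i : ZMod (g - 1)) (x : CIdx g) (s : Multiset (CIdx g)) :
    condR g i (x ::ₘ s) ↔
      (x = Sum.inl (i - 1) ∨ x = Sum.inl i ∨ x = Sum.inr ()) ∧ condR g i s := by
  constructor
  · intro h
    exact ⟨h x (Multiset.mem_cons_self x s), fun y hy => h y (Multiset.mem_cons_of_mem hy)⟩
  · rintro ⟨hx, hs⟩ y hy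
    rcases Multiset.mem_cons.mp hy with rfl | hy
    · exact hx
    · exact hs y hy

lemma varC_inr (g : ℕ) (i : ZMod (g - 1)) : varC g (Sum.inr ()) i = RatFunc.X ^ (-1 : ℤ) := rfl

lemma varC_inl_self (g : ℕ) (h1 : (1 : ZMod (g - 1)) ≠ 0) (j : ZMod (g - 1)) :
    varC g (Sum.inl j) j = 1 := by
  have : j ≠ j + 1 := by simp [h1]
  simp [varC, omegaR, Pi.single_apply, this]

lemma varC_inl_pred (g : ℕ) (h1 : (1 : ZMod (g - 1)) ≠ 0) (i : ZMod (g - 1)) :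
    varC g (Sum.inl (i - 1)) i = RatFunc.X ^ (-2 : ℤ) := by
  have h : i - 1 + 1 = i := by ring
  have hne : i ≠ i - 1 := fun he => h1 (sub_eq_self.mp he.symm)
  simp [varC, omegaR, Pi.single_apply, hne, h]

lemma varC_inl_other (g : ℕ) (j i : ZMod (g - 1)) (h : i ≠ j) (h' : i ≠ j + 1) :
    varC g (Sum.inl j) i = 0 := by
  simp [varC, omegaR, Pi.single_apply, h, h']

lemma value_apply (g : ℕ) (h1 : (1 : ZMod (g - 1)) ≠ 0) (i : ZMod (g - 1))
    (σ : Multiset (CIdx g)) :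
    ((σ.map (varC g)).prod) i
      = if condR g i σ then RatFunc.X ^ (-(texp g i σ : ℤ)) else 0 := by
  have hXne : (RatFunc.X : RatFunc ℂ) ≠ 0 := RatFunc.X_ne_zero
  have hpredne : (Sum.inl (i - 1) : CIdx g) ≠ Sum.inl i := by
    simp only [ne_eq, Sum.inl.injEq, sub_eq_self]; exact h1
  induction σ using Multiset.induction with
  | empty =>
    rw [if_pos]
    · simp [texp]
    · intro x hx; simp at hx
  | cons x s ih =>
    have hsplit : ((Multiset.map (varC g) (x ::ₘ s)).prod) i
        = (varC g x) i * ((Multiset.map (varC g) s).prod) i := by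
      rw [Multiset.map_cons, Multiset.prod_cons]; rfl
    rw [hsplit, ih, condR_cons]
    obtain (j | ⟨⟩) := x
    · by_cases hij : i = j
      · subst hij
        rw [varC_inl_self g h1]
        have htexp : texp g i (Sum.inl i ::ₘ s) = texp g i s := by
          simp only [texp]
          rw [Multiset.count_cons_of_ne hpredne, Multiset.count_cons_of_ne (by simp)]
        have hc : ((Sum.inl i : CIdx g) = Sum.inl (i - 1) ∨ (Sum.inl i : CIdx g) = Sum.inl i
            ∨ (Sum.inl i : CIdx g) = Sum.inr ()) ↔ True := by simp
        rw [htexp, hc, true_and, one_mul]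
      · by_cases hij1 : i = j + 1
        · have hj : j = i - 1 := by rw [hij1]; ring
          subst hj
          rw [varC_inl_pred g h1]
          have htexp : texp g i ((Sum.inl (i-1) : CIdx g) ::ₘ s) = texp g i s + 2 := by
            simp only [texp]
            rw [Multiset.count_cons_self, Multiset.count_cons_of_ne (by simp)]
            ring
          have hc : ((Sum.inl (i-1) : CIdx g) = Sum.inl (i - 1) ∨ (Sum.inl (i-1) : CIdx g) = Sum.inl i
              ∨ (Sum.inl (i-1) : CIdx g) = Sum.inr ()) ↔ True := by simp
          rw [htexp, hc, true_and]
          by_cases hcs : condR g i s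
          · rw [if_pos hcs, if_pos hcs, ← zpow_add₀ hXne]
            congr 1; push_cast; ring
          · rw [if_neg hcs, if_neg hcs, mul_zero]
        · rw [varC_inl_other g j i hij hij1, zero_mul, if_neg]
          rintro ⟨(h | h | h), -⟩
          · injection h with h'
            exact hij1 (by rw [h']; ring)
          · injection h with h'
            exact hij h'.symm
          · exact (Sum.inl_ne_inr h).elim
    · rw [varC_inr]
      have htexp : texp g i ((Sum.inr () : CIdx g) ::ₘ s) = texp g i s + 1 := by
        simp only [texp]
        rw [Multiset.count_cons_of_ne (by simp), Multiset.count_cons_self]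
        ring
      have hc : ((Sum.inr () : CIdx g) = Sum.inl (i - 1) ∨ (Sum.inr () : CIdx g) = Sum.inl i
          ∨ (Sum.inr () : CIdx g) = Sum.inr ()) ↔ True := by simp
      rw [htexp, hc, true_and]
      by_cases hcs : condR g i s
      · rw [if_pos hcs, if_pos hcs, ← zpow_add₀ hXne]
        congr 1; push_cast; ring
      · rw [if_neg hcs, if_neg hcs, mul_zero]

lemma cF_value (g : ℕ) (h1 : (1 : ZMod (g - 1)) ≠ 0) (i : ZMod (g - 1)) (e : ℕ)
    (σ : Multiset (CIdx g)) :
    cF g i e ((σ.map (varC g)).prod)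
      = if condR g i σ ∧ e = texp g i σ then 1 else 0 := by
  rw [cF_apply, value_apply g h1]
  by_cases hc : condR g i σ
  · rw [if_pos hc, cR_X]
    by_cases he : e = texp g i σ
    · rw [if_pos (by omega), if_pos ⟨hc, he⟩]
    · rw [if_neg (by omega), if_neg (by tauto)]
  · rw [if_neg hc, map_zero, if_neg (by tauto)]

-- ## counting lemmas

lemma condR_card (g : ℕ) (h1 : (1 : ZMod (g - 1)) ≠ 0) (i : ZMod (g - 1))
    (σ : Multiset (CIdx g)) (hc : condR g i σ) :
    σ.count (Sum.inl (i - 1)) + σ.count (Sum.inl i) + σ.count (Sum.inr ())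
      = Multiset.card σ := by
  have hpredne : (Sum.inl (i - 1) : CIdx g) ≠ Sum.inl i := by
    simp only [ne_eq, Sum.inl.injEq, sub_eq_self]; exact h1
  induction σ using Multiset.induction with
  | empty => simp
  | cons x s ih =>
    rw [condR_cons] at hc
    obtain ⟨hx, hs⟩ := hc
    have := ih hs
    rcases hx with rfl | rfl | rfl
    · rw [Multiset.count_cons_self, Multiset.count_cons_of_ne hpredne.symm,
        Multiset.count_cons_of_ne (by simp), Multiset.card_cons]
      omega
    · rw [Multiset.count_cons_of_ne hpredne, Multiset.count_cons_self,
        Multiset.count_cons_of_ne (by simp), Multiset.card_cons]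
      omega
    · rw [Multiset.count_cons_of_ne (by simp), Multiset.count_cons_of_ne (by simp),
        Multiset.count_cons_self, Multiset.card_cons]
      omega

lemma count_two_le_card {α : Type*} [DecidableEq α] (x y : α) (hxy : x ≠ y)
    (σ : Multiset α) : σ.count x + σ.count y ≤ Multiset.card σ := by
  induction σ using Multiset.induction with
  | empty => simp
  | cons a s ih =>
    rw [Multiset.card_cons, Multiset.count_cons, Multiset.count_cons]
    by_cases hx : x = a
    · rw [if_pos hx, if_neg (fun hy => hxy (by rw [hx, ← hy]))]
      omega
    · rw [if_neg hx]
      split <;> omega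

-- ## tie identities

lemma tie1 (g m : ℕ) (hm : 2 ≤ m) (h1 : (1 : ZMod (g - 1)) ≠ 0)
    (h2 : (2 : ZMod (g - 1)) ≠ 0) (i : ZMod (g - 1)) (σ : Multiset (CIdx g))
    (hcard : Multiset.card σ = m) :
    cF g (i + 1) (2 * m - 1) ((σ.map (varC g)).prod) = cF g i 1 ((σ.map (varC g)).prod) := by
  have hii : (i + 1) - 1 = i := by ring
  rw [cF_value g h1, cF_value g h1]
  have hiff : (condR g (i+1) σ ∧ 2 * m - 1 = texp g (i+1) σ) ↔
      (condR g i σ ∧ 1 = texp g i σ) := by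
    constructor
    · rintro ⟨hc, ht⟩
      have hcnt := condR_card g h1 (i+1) σ hc
      rw [hii] at hcnt
      simp only [texp, hii] at ht ⊢
      -- counts
      set c := σ.count (Sum.inl i) with hcdef
      set d := σ.count (Sum.inl (i+1)) with hddef
      set k := σ.count (Sum.inr ()) with hkdef
      have hd0 : d = 0 := by omega
      have hk1 : k = 1 := by omega
      have hb0 : σ.count (Sum.inl (i-1)) = 0 := by
        rw [Multiset.count_eq_zero]
        intro hmem
        rcases hc _ hmem with h | h | h
        · rw [hii] at h; injection h with h'
          exact h1 (sub_eq_self.mp h')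
        · injection h with h'
          apply h2
          have : i - 1 - (i + 1) = 0 := by rw [h']; ring
          have h2' : (i + 1) - (i - 1) = 2 := by ring
          rw [← h2']
          rw [sub_eq_zero] at this
          rw [this]; ring
        · exact (Sum.inl_ne_inr h).elim
      constructor
      · intro x hx
        rcases hc x hx with h | h | h
        · rw [hii] at h; exact Or.inr (Or.inl h)
        · exfalso
          have : σ.count (Sum.inl (i+1)) ≠ 0 := by
            rw [Multiset.count_ne_zero]; rwa [← h]
          omega
        · exact Or.inr (Or.inr h)
      · omega
    · rintro ⟨hc, ht⟩
      have hcnt := condR_card g h1 i σ hc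
      simp only [texp, hii] at ht ⊢
      set b := σ.count (Sum.inl (i-1)) with hbdef
      set a := σ.count (Sum.inl i) with hadef
      set k := σ.count (Sum.inr ()) with hkdef
      have hb0 : b = 0 := by omega
      have hk1 : k = 1 := by omega
      have ham : a = m - 1 := by omega
      constructor
      · intro x hx
        rcases hc x hx with h | h | h
        · exfalso
          have : σ.count (Sum.inl (i-1)) ≠ 0 := by
            rw [Multiset.count_ne_zero]; rwa [← h]
          omega
        · rw [hii]; exact Or.inl h
        · exact Or.inr (Or.inr h)
      · omega
  rw [if_congr hiff rfl rfl]

lemma tie2 (g m : ℕ) (hm : 2 ≤ m) (h1 : (1 : ZMod (g - 1)) ≠ 0)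
    (h2 : (2 : ZMod (g - 1)) ≠ 0) (i : ZMod (g - 1)) (σ : Multiset (CIdx g))
    (hcard : Multiset.card σ = m) :
    cF g (i + 1) (2 * m) ((σ.map (varC g)).prod) = cF g i 0 ((σ.map (varC g)).prod) := by
  have hii : (i + 1) - 1 = i := by ring
  rw [cF_value g h1, cF_value g h1]
  have hiff : (condR g (i+1) σ ∧ 2 * m = texp g (i+1) σ) ↔
      (condR g i σ ∧ 0 = texp g i σ) := by
    constructor
    · rintro ⟨hc, ht⟩
      have hcnt := condR_card g h1 (i+1) σ hc
      rw [hii] at hcnt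
      simp only [texp, hii] at ht ⊢
      set c := σ.count (Sum.inl i) with hcdef
      set d := σ.count (Sum.inl (i+1)) with hddef
      set k := σ.count (Sum.inr ()) with hkdef
      have hd0 : d = 0 := by omega
      have hk0 : k = 0 := by omega
      have hb0 : σ.count (Sum.inl (i-1)) = 0 := by
        rw [Multiset.count_eq_zero]
        intro hmem
        rcases hc _ hmem with h | h | h
        · rw [hii] at h; injection h with h'
          exact h1 (sub_eq_self.mp h')
        · injection h with h'
          apply h2
          have : i - 1 - (i + 1) = 0 := by rw [h']; ring
          have h2' : (i + 1) - (i - 1) = 2 := by ring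
          rw [← h2']
          rw [sub_eq_zero] at this
          rw [this]; ring
        · exact (Sum.inl_ne_inr h).elim
      constructor
      · intro x hx
        rcases hc x hx with h | h | h
        · rw [hii] at h; exact Or.inr (Or.inl h)
        · exfalso
          have : σ.count (Sum.inl (i+1)) ≠ 0 := by
            rw [Multiset.count_ne_zero]; rwa [← h]
          omega
        · exact Or.inr (Or.inr h)
      · omega
    · rintro ⟨hc, ht⟩
      have hcnt := condR_card g h1 i σ hc
      simp only [texp, hii] at ht ⊢
      set b := σ.count (Sum.inl (i-1)) with hbdef
      set a := σ.count (Sum.inl i) with hadef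
      set k := σ.count (Sum.inr ()) with hkdef
      have hb0 : b = 0 := by omega
      have hk0 : k = 0 := by omega
      constructor
      · intro x hx
        rcases hc x hx with h | h | h
        · exfalso
          have : σ.count (Sum.inl (i-1)) ≠ 0 := by
            rw [Multiset.count_ne_zero]; rwa [← h]
          omega
        · rw [hii]; exact Or.inl h
        · exfalso
          have : σ.count (Sum.inr ()) ≠ 0 := by
            rw [Multiset.count_ne_zero]; rwa [← h]
          omega
      · omega
  rw [if_congr hiff rfl rfl]

-- ## odd coefficients vanish on even-η monomials

lemma cF_odd_even (g : ℕ) (h1 : (1 : ZMod (g - 1)) ≠ 0) (i : ZMod (g - 1)) (t : ℕ)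
    (σ : Multiset (CIdx g)) (hk : σ.count (Sum.inr ()) % 2 = 0) :
    cF g i (2 * t + 1) ((σ.map (varC g)).prod) = 0 := by
  rw [cF_value g h1, if_neg]
  rintro ⟨-, ht⟩
  simp only [texp] at ht
  omega

-- ## the coefficient space Vc

def Vc (m : ℕ) : Submodule ℂ (RatFunc ℂ) :=
  Submodule.span ℂ (Set.range fun t : Fin (2 * m + 1) => (RatFunc.X : RatFunc ℂ) ^ (-(t : ℤ)))

lemma value_mem_Vc (g m : ℕ) (h1 : (1 : ZMod (g - 1)) ≠ 0) (i : ZMod (g - 1))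
    (σ : Multiset (CIdx g)) (hcard : Multiset.card σ = m) :
    ((σ.map (varC g)).prod) i ∈ Vc m := by
  rw [value_apply g h1]
  by_cases hc : condR g i σ
  · rw [if_pos hc]
    have hle : texp g i σ ≤ 2 * m := by
      have := count_two_le_card (Sum.inl (i-1) : CIdx g) (Sum.inr ()) (by simp) σ
      simp only [texp]
      omega
    have : (⟨texp g i σ, by omega⟩ : Fin (2 * m + 1)) = (⟨texp g i σ, by omega⟩ : Fin (2*m+1)) := rfl
    apply Submodule.subset_span
    exact ⟨⟨texp g i σ, by omega⟩, rfl⟩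
  · rw [if_neg hc]; exact Submodule.zero_mem _

lemma Vc_eq_zero (m : ℕ) (q : RatFunc ℂ) (hq : q ∈ Vc m)
    (h : ∀ e : Fin (2 * m + 1), cR (-(e : ℤ)) q = 0) : q = 0 := by
  rw [Vc, Submodule.mem_span_range_iff_exists_fun] at hq
  obtain ⟨c, rfl⟩ := hq
  have hc : ∀ e : Fin (2 * m + 1), c e = 0 := by
    intro e
    have he := h e
    rw [map_sum] at he
    have : ∀ t : Fin (2 * m + 1),
        cR (-(e : ℤ)) (c t • (RatFunc.X : RatFunc ℂ) ^ (-(t : ℤ)))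
          = if t = e then c t else 0 := by
      intro t
      rw [map_smul, cR_X]
      by_cases hte : t = e
      · subst hte; rw [if_pos rfl, if_pos rfl]; simp
      · rw [if_neg hte, if_neg, smul_zero]
        intro hcontra
        exact hte (by ext; omega)
    rw [Finset.sum_congr rfl (fun t _ => this t), Finset.sum_ite_eq' Finset.univ e c] at he
    simpa using he
  simp [hc]

-- ## U_m

lemma UC_component (g m : ℕ) (h1 : (1 : ZMod (g - 1)) ≠ 0) (p : Pro g) (hp : p ∈ UC g m)
    (i : ZMod (g - 1)) : p i ∈ Vc m := by
  have hle : UC g m ≤ Submodule.pi Set.univ (fun _ : ZMod (g - 1) => Vc m) := by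
    rw [UC, Submodule.span_le]
    rintro q ⟨σ, hcard, rfl⟩
    intro j _
    exact value_mem_Vc g m h1 j σ hcard
  exact hle hp i (Set.mem_univ i)

lemma UC_tie1 (g m : ℕ) (hm : 2 ≤ m) (h1 : (1 : ZMod (g - 1)) ≠ 0)
    (h2 : (2 : ZMod (g - 1)) ≠ 0) (i : ZMod (g - 1)) (p : Pro g) (hp : p ∈ UC g m) :
    cF g i (2 * m - 1) p = cF g (i - 1) 1 p := by
  have hsub : i - 1 + 1 = i := by ring
  have hker : UC g m ≤ LinearMap.ker (cF g i (2 * m - 1) - cF g (i - 1) 1) := by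
    rw [UC, Submodule.span_le]
    rintro q ⟨σ, hcard, rfl⟩
    rw [SetLike.mem_coe, LinearMap.mem_ker, LinearMap.sub_apply, sub_eq_zero]
    conv_lhs => rw [← hsub]
    exact tie1 g m hm h1 h2 (i - 1) σ hcard
  have := hker hp
  rw [LinearMap.mem_ker, LinearMap.sub_apply, sub_eq_zero] at this
  exact this

lemma UC_tie2 (g m : ℕ) (hm : 2 ≤ m) (h1 : (1 : ZMod (g - 1)) ≠ 0)
    (h2 : (2 : ZMod (g - 1)) ≠ 0) (i : ZMod (g - 1)) (p : Pro g) (hp : p ∈ UC g m) :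
    cF g i (2 * m) p = cF g (i - 1) 0 p := by
  have hsub : i - 1 + 1 = i := by ring
  have hker : UC g m ≤ LinearMap.ker (cF g i (2 * m) - cF g (i - 1) 0) := by
    rw [UC, Submodule.span_le]
    rintro q ⟨σ, hcard, rfl⟩
    rw [SetLike.mem_coe, LinearMap.mem_ker, LinearMap.sub_apply, sub_eq_zero]
    conv_lhs => rw [← hsub]
    exact tie2 g m hm h1 h2 (i - 1) σ hcard
  have := hker hp
  rw [LinearMap.mem_ker, LinearMap.sub_apply, sub_eq_zero] at this
  exact this

-- ## the truncated coefficient map is injective on U_m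

def PhM (g m : ℕ) : Pro g →ₗ[ℂ] ((ZMod (g - 1) × Fin (2 * m - 1)) → ℂ) :=
  LinearMap.pi (fun j => cF g j.1 j.2.1)

lemma PhM_inj (g m : ℕ) (hm : 2 ≤ m) (h1 : (1 : ZMod (g - 1)) ≠ 0)
    (h2 : (2 : ZMod (g - 1)) ≠ 0) (p : Pro g) (hp : p ∈ UC g m)
    (h : PhM g m p = 0) : p = 0 := by
  have hsmall : ∀ (i : ZMod (g - 1)) (e : ℕ), e < 2 * m - 1 → cF g i e p = 0 := by
    intro i e he
    have := congrFun h (i, ⟨e, he⟩)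
    simpa [PhM] using this
  have hall : ∀ (i : ZMod (g - 1)) (e : ℕ), e ≤ 2 * m → cF g i e p = 0 := by
    intro i e he
    rcases lt_or_ge e (2 * m - 1) with hlt | hge
    · exact hsmall i e hlt
    · rcases Nat.eq_or_lt_of_le hge with heq | hlt
      · rw [← heq, UC_tie1 g m hm h1 h2 i p hp]
        exact hsmall (i - 1) 1 (by omega)
      · have : e = 2 * m := by omega
        rw [this, UC_tie2 g m hm h1 h2 i p hp]
        exact hsmall (i - 1) 0 (by omega)
  funext i
  rw [Pi.zero_apply]
  apply Vc_eq_zero m (p i) (UC_component g m h1 p hp i)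
  intro e
  rw [← cF_apply]
  exact hall i e.1 (by omega)

-- ## block monomials

def blk (g : ℕ) (i : ZMod (g - 1)) (b a k : ℕ) : Multiset (CIdx g) :=
  Multiset.replicate b (Sum.inl (i - 1)) + Multiset.replicate a (Sum.inl i)
    + Multiset.replicate k (Sum.inr ())

lemma blk_card (g : ℕ) (i : ZMod (g - 1)) (b a k : ℕ) :
    Multiset.card (blk g i b a k) = b + a + k := by
  simp [blk]

lemma blk_mem (g : ℕ) (i : ZMod (g - 1)) (b a k : ℕ) (x : CIdx g) :
    x ∈ blk g i b a k ↔ (b ≠ 0 ∧ x = Sum.inl (i - 1)) ∨ (a ≠ 0 ∧ x = Sum.inl i)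
      ∨ (k ≠ 0 ∧ x = Sum.inr ()) := by
  simp [blk, Multiset.mem_replicate, or_assoc]

lemma blk_count_pred (g : ℕ) (h1 : (1 : ZMod (g - 1)) ≠ 0) (i : ZMod (g - 1)) (b a k : ℕ) :
    (blk g i b a k).count (Sum.inl (i - 1)) = b := by
  have hne : (Sum.inl (i - 1) : CIdx g) ≠ Sum.inl i := by
    simp only [ne_eq, Sum.inl.injEq, sub_eq_self]; exact h1
  have hne2 : i ≠ i - 1 := fun h => h1 (sub_eq_self.mp h.symm)
  simp [blk, Multiset.count_replicate, hne, hne2]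

lemma blk_count_inr (g : ℕ) (i : ZMod (g - 1)) (b a k : ℕ) :
    (blk g i b a k).count (Sum.inr ()) = k := by
  simp [blk, Multiset.count_replicate]

lemma zmod_sub_one_inj {n : ℕ} (i j : ZMod n) (h : i - 1 = j - 1) : i = j := by
  have := congrArg (· + 1) h
  simpa [sub_add_cancel] using this

lemma cF_blkB (g : ℕ) (h1 : (1 : ZMod (g - 1)) ≠ 0) (h2 : (2 : ZMod (g - 1)) ≠ 0)
    (i i' : ZMod (g - 1)) (b a k : ℕ) (hb : 1 ≤ b) (ha : 1 ≤ a) (e : ℕ) :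
    cF g i' e ((Multiset.map (varC g) (blk g i b a k)).prod)
      = if i' = i ∧ e = 2 * b + k then 1 else 0 := by
  rw [cF_value g h1]
  apply if_congr _ rfl rfl
  constructor
  · rintro ⟨hc, ht⟩
    have hmem1 : (Sum.inl (i - 1) : CIdx g) ∈ blk g i b a k := by
      rw [blk_mem]; exact Or.inl ⟨by omega, rfl⟩
    have hmem2 : (Sum.inl i : CIdx g) ∈ blk g i b a k := by
      rw [blk_mem]; exact Or.inr (Or.inl ⟨by omega, rfl⟩)
    have hi' : i' = i := by
      rcases hc _ hmem1 with h | h | h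
      · -- i - 1 = i' - 1
        injection h with h'
        exact (zmod_sub_one_inj i i' h').symm
      · -- i - 1 = i'
        injection h with h'
        rcases hc _ hmem2 with hh | hh | hh
        · -- i = i' - 1 : then i = i - 2, contradiction
          injection hh with hh'
          exfalso
          apply h2
          have : i' = i - 1 := h'.symm
          rw [this] at hh'
          -- hh' : i = i - 1 - 1
          have : i - (i - 1 - 1) = 0 := by rw [← hh']; ring
          have h2' : i - (i - 1 - 1) = 2 := by ring
          rw [h2'] at this
          exact this
        · -- i = i', but also i - 1 = i', so i - 1 = i
          injection hh with hh'
          exfalso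
          apply h1
          have : i - 1 = i := by rw [h', ← hh']
          exact sub_eq_self.mp this
        · exact (Sum.inl_ne_inr hh).elim
      · exact (Sum.inl_ne_inr h).elim
    subst hi'
    refine ⟨rfl, ?_⟩
    rwa [texp, blk_count_pred g h1, blk_count_inr] at ht
  · rintro ⟨rfl, he⟩
    constructor
    · intro x hx
      rw [blk_mem] at hx
      rcases hx with ⟨-, rfl⟩ | ⟨-, rfl⟩ | ⟨-, rfl⟩
      · exact Or.inl rfl
      · exact Or.inr (Or.inl rfl)
      · exact Or.inr (Or.inr rfl)
    · rwa [texp, blk_count_pred g h1, blk_count_inr]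

lemma cF_blkA (g m : ℕ) (hm : 2 ≤ m) (h1 : (1 : ZMod (g - 1)) ≠ 0)
    (i i' : ZMod (g - 1)) (e : ℕ) :
    cF g i' e ((Multiset.map (varC g) (blk g i 0 (m - 1) 1)).prod)
      = if (i' = i ∧ e = 1) ∨ (i' = i + 1 ∧ e = 2 * m - 1) then 1 else 0 := by
  rw [cF_value g h1]
  apply if_congr _ rfl rfl
  have hcount_pred : ∀ j : ZMod (g - 1), (blk g i 0 (m - 1) 1).count (Sum.inl j)
      = if j = i then m - 1 else 0 := by
    intro j
    by_cases hj : j = i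
    · subst hj; simp [blk, Multiset.count_replicate]
    · rw [if_neg hj]
      simp [blk, Multiset.count_replicate, hj, Ne.symm hj]
  constructor
  · rintro ⟨hc, ht⟩
    have hmem2 : (Sum.inl i : CIdx g) ∈ blk g i 0 (m - 1) 1 := by
      rw [blk_mem]; exact Or.inr (Or.inl ⟨by omega, rfl⟩)
    rcases hc _ hmem2 with h | h | h
    · -- i = i' - 1, so i' = i + 1
      injection h with h'
      right
      have hi' : i' = i + 1 := by rw [h']; ring
      refine ⟨hi', ?_⟩
      rw [texp, blk_count_inr, hcount_pred] at ht
      rw [if_pos (by rw [hi']; ring)] at ht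
      omega
    · injection h with h'
      left
      refine ⟨h'.symm, ?_⟩
      rw [texp, blk_count_inr, hcount_pred] at ht
      have hne : i' - 1 ≠ i := by
        rw [← h']
        intro hcontra
        exact h1 (sub_eq_self.mp hcontra)
      rw [if_neg hne] at ht
      omega
    · exact (Sum.inl_ne_inr h).elim
  · rintro (⟨rfl, he⟩ | ⟨rfl, he⟩)
    · constructor
      · intro x hx
        rw [blk_mem] at hx
        rcases hx with ⟨hb, -⟩ | ⟨-, rfl⟩ | ⟨-, rfl⟩
        · omega
        · exact Or.inr (Or.inl rfl)
        · exact Or.inr (Or.inr rfl)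
      · rw [texp, blk_count_inr, hcount_pred, if_neg]
        · omega
        · intro hcontra
          exact h1 (sub_eq_self.mp hcontra)
    · constructor
      · intro x hx
        rw [blk_mem] at hx
        rcases hx with ⟨hb, -⟩ | ⟨-, rfl⟩ | ⟨-, rfl⟩
        · omega
        · left
          congr 1
          ring
        · exact Or.inr (Or.inr rfl)
      · rw [texp, blk_count_inr, hcount_pred, if_pos (by ring)]
        omega

-- ## the odd-coefficient map and the distinguished monomials

def ThM (g m : ℕ) : Pro g →ₗ[ℂ] ((ZMod (g - 1) × Fin (m - 1)) → ℂ) :=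
  LinearMap.pi (fun j => cF g j.1 (2 * j.2.1 + 1))

def dM (g m : ℕ) (j : ZMod (g - 1) × Fin (m - 1)) : Multiset (CIdx g) :=
  if j.2.1 = 0 then blk g j.1 0 (m - 1) 1
  else if 2 * j.2.1 + 1 ≤ m then blk g j.1 1 (m - (2 * j.2.1 + 1) + 1) (2 * j.2.1 + 1 - 2)
  else blk g j.1 (2 * j.2.1 + 1 - m + 1) 1 (2 * m - 2 - (2 * j.2.1 + 1))

lemma dM_card (g m : ℕ) (hm : 2 ≤ m) (j : ZMod (g - 1) × Fin (m - 1)) :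
    Multiset.card (dM g m j) = m := by
  have ht := j.2.2
  rw [dM]
  split
  · rw [blk_card]; omega
  · split <;> (rw [blk_card]; omega)

lemma dM_count_inr_odd (g m : ℕ) (hm : 2 ≤ m) (j : ZMod (g - 1) × Fin (m - 1)) :
    (dM g m j).count (Sum.inr ()) % 2 = 1 := by
  have ht := j.2.2
  rw [dM]
  split
  · rw [blk_count_inr]
  · split <;> (rw [blk_count_inr]; omega)

lemma ThM_dM (g m : ℕ) (hm : 2 ≤ m) (h1 : (1 : ZMod (g - 1)) ≠ 0)
    (h2 : (2 : ZMod (g - 1)) ≠ 0) (j : ZMod (g - 1) × Fin (m - 1)) :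
    ThM g m ((Multiset.map (varC g) (dM g m j)).prod) = Pi.single j 1 := by
  obtain ⟨i, t⟩ := j
  have ht := t.2
  funext ⟨i', t'⟩
  have ht' := t'.2
  have hsingle : (Pi.single (i, t) (1 : ℂ) : (ZMod (g - 1) × Fin (m - 1)) → ℂ) (i', t')
      = if (i', t') = (i, t) then 1 else 0 := by
    rw [Pi.single_apply]
  have hpair : ((i', t') = (i, t)) ↔ (i' = i ∧ t'.1 = t.1) := by
    rw [Prod.ext_iff, Fin.ext_iff]
  have hth : ThM g m ((Multiset.map (varC g) (dM g m (i, t))).prod) (i', t')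
      = cF g i' (2 * t'.1 + 1) ((Multiset.map (varC g) (dM g m (i, t))).prod) := rfl
  rw [hsingle, hth, dM]
  dsimp only
  by_cases ht0 : t.1 = 0
  · rw [if_pos ht0]
    rw [cF_blkA g m hm h1]
    apply if_congr _ rfl rfl
    rw [hpair]
    constructor
    · rintro (⟨rfl, he⟩ | ⟨rfl, he⟩)
      · exact ⟨rfl, by omega⟩
      · omega
    · rintro ⟨rfl, he⟩
      exact Or.inl ⟨rfl, by omega⟩
  · rw [if_neg ht0]
    by_cases hle : 2 * t.1 + 1 ≤ m
    · rw [if_pos hle, cF_blkB g h1 h2 i i' _ _ _ le_rfl (by omega)]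
      apply if_congr _ rfl rfl
      rw [hpair]
      constructor
      · rintro ⟨rfl, he⟩
        exact ⟨rfl, by omega⟩
      · rintro ⟨rfl, he⟩
        exact ⟨rfl, by omega⟩
    · rw [if_neg hle, cF_blkB g h1 h2 i i' _ _ _ (by omega) le_rfl]
      apply if_congr _ rfl rfl
      rw [hpair]
      constructor
      · rintro ⟨rfl, he⟩
        exact ⟨rfl, by omega⟩
      · rintro ⟨rfl, he⟩
        exact ⟨rfl, by omega⟩

lemma dM_mem_UC (g m : ℕ) (hm : 2 ≤ m) (j : ZMod (g - 1) × Fin (m - 1)) :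
    ((Multiset.map (varC g) (dM g m j)).prod) ∈ UC g m := by
  apply Submodule.subset_span
  exact ⟨dM g m j, dM_card g m hm j, rfl⟩

lemma ThM_even (g m : ℕ) (h1 : (1 : ZMod (g - 1)) ≠ 0) (σ : Multiset (CIdx g))
    (hk : σ.count (Sum.inr ()) % 2 = 0) :
    ThM g m ((σ.map (varC g)).prod) = 0 := by
  funext ⟨i, t⟩
  have : ThM g m ((σ.map (varC g)).prod) (i, t)
      = cF g i (2 * t.1 + 1) ((σ.map (varC g)).prod) := rfl
  rw [this, cF_odd_even g h1 i t.1 σ hk]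
  rfl

-- ## weights

lemma wsum (g : ℕ) (σ : Multiset (CIdx g)) :
    (σ.map (rhoDest g)).sum = (g : ℤ) * σ.count (Sum.inr ()) - Multiset.card σ := by
  induction σ using Multiset.induction with
  | empty => simp
  | cons x s ih =>
    rw [Multiset.map_cons, Multiset.sum_cons, ih, Multiset.card_cons, Multiset.count_cons]
    obtain (j | ⟨⟩) := x
    · rw [if_neg (by simp)]
      simp only [rhoDest, Sum.elim_inl]
      push_cast
      ring
    · rw [if_pos rfl]
      simp only [rhoDest, Sum.elim_inr]
      push_cast
      ring


set_option maxHeartbeats 1000000 in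
theorem main_ineq (g m : ℕ) (hm : 2 ≤ m) (hg : 2 * m + 3 ≤ g) (S : Finset (CMon g m))
    (hLI : LinearIndependent ℂ (fun s : S => (((s : CMon g m)).1.map (varC g)).prod))
    (hSpan : Submodule.span ℂ ((fun s : CMon g m => (s.1.map (varC g)).prod) '' S) = UC g m) :
    ((g : ℤ) - 1) * (((m : ℤ) - 1) * ((g : ℤ) - 1) - (2 * (m : ℤ) ^ 2 - 2 * m + 1)) ≤
        (∑ σ ∈ S, (σ.1.map (rhoDest g)).sum) := by
  classical
  haveI : NeZero (g - 1) := ⟨by omega⟩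
  have h1 : (1 : ZMod (g - 1)) ≠ 0 := by
    have : ¬ ((1 : ℕ) : ZMod (g - 1)) = 0 := by
      rw [ZMod.natCast_eq_zero_iff]
      intro h
      have := Nat.le_of_dvd (by norm_num) h
      omega
    simpa using this
  have h2 : (2 : ZMod (g - 1)) ≠ 0 := by
    have : ¬ ((2 : ℕ) : ZMod (g - 1)) = 0 := by
      rw [ZMod.natCast_eq_zero_iff]
      intro h
      have := Nat.le_of_dvd (by norm_num) h
      omega
    simpa using this
  set val : CMon g m → Pro g := fun s => (s.1.map (varC g)).prod with hval
  -- S-values lie in UC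
  have hsub : ∀ (s : CMon g m), s ∈ S → val s ∈ UC g m := by
    intro s _
    exact Submodule.subset_span ⟨s.1, s.2, rfl⟩
  -- Step 1 : cardinality bound
  have hcard1 : S.card ≤ (g - 1) * (2 * m - 1) := by
    have hdisj : Disjoint (Submodule.span ℂ (Set.range (fun s : S => val s)))
        (LinearMap.ker (PhM g m)) := by
      rw [Submodule.disjoint_def]
      intro p hp hker
      apply PhM_inj g m hm h1 h2 p _ (LinearMap.mem_ker.mp hker)
      have hr : Set.range (fun s : S => val s) ⊆ (UC g m : Set (Pro g)) := by
        rintro _ ⟨s, rfl⟩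
        exact hsub s.1 s.2
      exact (Submodule.span_le.mpr hr) hp
    have hLI2 : LinearIndependent ℂ ((PhM g m) ∘ (fun s : S => val s)) := hLI.map hdisj
    have hfin := hLI2.fintype_card_le_finrank
    rw [Module.finrank_pi, Fintype.card_prod, ZMod.card, Fintype.card_fin] at hfin
    rw [← Fintype.card_coe S]
    exact hfin
  -- Step 2 : many odd monomials
  set Sodd : Finset (CMon g m) := S.filter (fun σ => σ.1.count (Sum.inr ()) % 2 = 1) with hSodd
  have hcard2 : (g - 1) * (m - 1) ≤ Sodd.card := by
    set A : Finset ((ZMod (g - 1) × Fin (m - 1)) → ℂ) :=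
      Sodd.image (fun σ => ThM g m (val σ)) with hA
    have hsingle_mem : ∀ j : ZMod (g - 1) × Fin (m - 1),
        (Pi.single j 1 : (ZMod (g - 1) × Fin (m - 1)) → ℂ) ∈ Submodule.span ℂ (A : Set _) := by
      intro j
      have h1m : ThM g m ((Multiset.map (varC g) (dM g m j)).prod)
          ∈ Submodule.map (ThM g m) (UC g m) :=
        Submodule.mem_map_of_mem (dM_mem_UC g m hm j)
      rw [← hSpan, Submodule.map_span, ← Set.image_comp] at h1m
      rw [← ThM_dM g m hm h1 h2 j]
      have hle : Submodule.span ℂ ((ThM g m ∘ fun s : CMon g m => val s) '' S)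
          ≤ Submodule.span ℂ (A : Set _) := by
        rw [Submodule.span_le]
        rintro _ ⟨σ, hσ, rfl⟩
        by_cases hodd : σ.1.count (Sum.inr ()) % 2 = 1
        · apply Submodule.subset_span
          rw [hA, Finset.coe_image]
          exact ⟨σ, by rw [hSodd]; exact Finset.mem_coe.mpr (Finset.mem_filter.mpr ⟨hσ, hodd⟩), rfl⟩
        · have : ThM g m (val σ) = 0 := ThM_even g m h1 σ.1 (by omega)
          simp only [Function.comp_apply, this]
          exact Submodule.zero_mem _
      exact hle h1m
    have htop : (⊤ : Submodule ℂ ((ZMod (g - 1) × Fin (m - 1)) → ℂ))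
        ≤ Submodule.span ℂ (A : Set _) := by
      intro x _
      rw [pi_eq_sum_univ x]
      apply Submodule.sum_mem
      intro j _
      apply Submodule.smul_mem
      have : (fun j' => if j = j' then (1:ℂ) else 0)
          = (Pi.single j 1 : (ZMod (g - 1) × Fin (m - 1)) → ℂ) := by
        funext j'
        rw [Pi.single_apply]
        simp [eq_comm]
      rw [this]
      exact hsingle_mem j
    have hfr : Module.finrank ℂ ((ZMod (g - 1) × Fin (m - 1)) → ℂ)
        ≤ A.card := by
      have hspan_eq : Submodule.span ℂ (A : Set ((ZMod (g - 1) × Fin (m - 1)) → ℂ)) = ⊤ := eq_top_iff.mpr htop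
      have hle := finrank_span_le_card (R := ℂ) (A : Set ((ZMod (g - 1) × Fin (m - 1)) → ℂ))
      rw [hspan_eq, finrank_top] at hle
      simpa using hle
    rw [Module.finrank_pi, Fintype.card_prod, ZMod.card, Fintype.card_fin] at hfr
    exact le_trans hfr (le_trans Finset.card_image_le le_rfl)
  -- Step 3 : sum manipulation
  have hwsum : ∑ σ ∈ S, (σ.1.map (rhoDest g)).sum
      = (g : ℤ) * (∑ σ ∈ S, (σ.1.count (Sum.inr ()) : ℤ)) - m * S.card := by
    have hterm : ∀ σ ∈ S, (Multiset.map (rhoDest g) σ.1).sum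
        = (g : ℤ) * (σ.1.count (Sum.inr ()) : ℤ) - m := by
      intro σ _
      rw [wsum g σ.1, σ.2]
    rw [Finset.sum_congr rfl hterm, Finset.sum_sub_distrib, ← Finset.mul_sum, Finset.sum_const,
      nsmul_eq_mul]
    ring
  have hE1 : (Sodd.card : ℤ) ≤ ∑ σ ∈ Sodd, (σ.1.count (Sum.inr ()) : ℤ) := by
    rw [Finset.card_eq_sum_ones Sodd]
    push_cast
    apply Finset.sum_le_sum
    intro σ hσ
    have hodd := (Finset.mem_filter.mp hσ).2
    have h1c : 1 ≤ σ.1.count (Sum.inr ()) := by omega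
    exact_mod_cast h1c
  have hE2 : ∑ σ ∈ Sodd, (σ.1.count (Sum.inr ()) : ℤ) ≤ ∑ σ ∈ S, (σ.1.count (Sum.inr ()) : ℤ) := by
    apply Finset.sum_le_sum_of_subset_of_nonneg (Finset.filter_subset _ _)
    intro σ _ _
    positivity
  have hcard1' : (S.card : ℤ) ≤ ((g : ℤ) - 1) * (2 * m - 1) := by
    zify [(by omega : 1 ≤ g), (by omega : 1 ≤ 2 * m)] at hcard1; linarith
  have hcard2' : ((g : ℤ) - 1) * ((m : ℤ) - 1) ≤ (Sodd.card : ℤ) := by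
    zify [(by omega : 1 ≤ g), (by omega : 1 ≤ m)] at hcard2; linarith
  have hElb : ((g : ℤ) - 1) * ((m : ℤ) - 1) ≤ ∑ σ ∈ S, (σ.1.count (Sum.inr ()) : ℤ) :=
    le_trans hcard2' (le_trans hE1 hE2)
  rw [hwsum]
  have hgE : (g : ℤ) * (((g : ℤ) - 1) * ((m : ℤ) - 1))
      ≤ (g : ℤ) * (∑ σ ∈ S, (σ.1.count (Sum.inr ()) : ℤ)) :=
    mul_le_mul_of_nonneg_left hElb (by positivity)
  have hmS : (m : ℤ) * S.card ≤ (m : ℤ) * (((g : ℤ) - 1) * (2 * m - 1)) :=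
    mul_le_mul_of_nonneg_left hcard1' (by positivity)
  have hring : ((g : ℤ) - 1) * (((m : ℤ) - 1) * ((g : ℤ) - 1) - (2 * (m : ℤ) ^ 2 - 2 * m + 1))
      = (g : ℤ) * (((g : ℤ) - 1) * ((m : ℤ) - 1)) - (m : ℤ) * (((g : ℤ) - 1) * (2 * m - 1)) := by
    ring
  linarith

/-- The 'only if' direction of Theorem 6.1. -/
theorem rosary_canonical_nonsemistable (g m : ℕ) (hodd : Odd g) (hm : 2 ≤ m)
    (hg : 2 * m + 3 ≤ g) (S : Finset (CMon g m)) (hS : IsMonBasisC g m S) :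
    ((g : ℤ) - 1) * (((m : ℤ) - 1) * ((g : ℤ) - 1) - (2 * (m : ℤ) ^ 2 - 2 * m + 1)) ≤
        (∑ σ ∈ S, (σ.1.map (rhoDest g)).sum) ∧
    ((g : ℤ) - 1) * (2 * (m : ℤ) - 3) ≤
        ((g : ℤ) - 1) * (((m : ℤ) - 1) * ((g : ℤ) - 1) - (2 * (m : ℤ) ^ 2 - 2 * m + 1)) ∧
    0 < ((g : ℤ) - 1) * (2 * (m : ℤ) - 3) := by
  obtain ⟨hLI, hSpan⟩ := hS
  have hmZ : (2 : ℤ) ≤ (m : ℤ) := by exact_mod_cast hm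
  have hgZ : 2 * (m : ℤ) + 3 ≤ (g : ℤ) := by exact_mod_cast hg
  refine ⟨main_ineq g m hm hg S hLI hSpan, ?_, ?_⟩
  · nlinarith [mul_nonneg (show (0:ℤ) ≤ (g:ℤ) - 1 by linarith)
      (mul_nonneg (show (0:ℤ) ≤ (m:ℤ) - 1 by linarith)
        (show (0:ℤ) ≤ (g:ℤ) - 3 - 2 * m by linarith))]
  · have := mul_pos (show (0:ℤ) < (g:ℤ) - 1 by linarith)
      (show (0:ℤ) < 2 * (m:ℤ) - 3 by linarith)
    linarith

end
end

section
/- For all natural numbers n and m: (i) the sum Σ_{i+j=d, 0≤i≤n, 0≤j≤m} c(i,j) takes the same value for every d with 0 ≤ d ≤ n+m; (ii) the sum Σ_{j=0}^m c(i,j) takes the same value for every i with 0 ≤ i ≤ n; and (iii) the sum Σ_{i=0}^n c(i,j) takes the same value for every j with 0 ≤ j ≤ m. Consequently, the multiset S of quadratic monomials x_i·y_j in which x_i·y_j occurs c(i,j) times satisfies: every degree in [0, n+m] occurs |S|/(n+m+1) times in S, each variable x_i occurs |S|/(n+1) times, and each variable y_j occurs |S|/(m+1) times. (Lemma 5.5.)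 -/
/-!
Lemma 5.5.  With `c(i,j) = C(i+j, i)·C(n+m−i−j, n−i)` for `0 ≤ i ≤ n`, `0 ≤ j ≤ m`:
(i) `Σ_{i+j=d} c(i,j)` is independent of `d ∈ [0, n+m]`;
(ii) `Σ_j c(i,j)` is independent of `i ∈ [0, n]`;
(iii) `Σ_i c(i,j)` is independent of `j ∈ [0, m]`.
Consequently, in the multiset `S` of quadratic monomials `x_i·y_j` in which `x_i·y_j`
occurs `c(i,j)` times, every degree in `[0, n+m]` occurs `|S|/(n+m+1)` times, every
variable `x_i` occurs `|S|/(n+1)` times, and every variable `y_j` occurs `|S|/(m+1)`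
times (stated multiplicatively to avoid division).
-/

open Finset

lemma chsy (x y : ℕ) : (x + y).choose y = (x + y).choose x := by
  rw [← Nat.choose_symm (Nat.le_add_left y x)]
  congr 1
  omega

/-- Key Vandermonde-type identity. -/
lemma Lhock : ∀ b a m : ℕ,
    ∑ j ∈ range (m + 1), (a + j).choose j * (b + (m - j)).choose (m - j)
      = (a + b + m + 1).choose m := by
  intro b
  induction b with
  | zero =>
    intro a m
    have h1 : ∀ j ∈ range (m + 1),
        (a + j).choose j * (0 + (m - j)).choose (m - j) = (a + j).choose a := by
      intro j hj
      rw [Nat.zero_add, Nat.choose_self, Nat.mul_one, chsy]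
    rw [Finset.sum_congr rfl h1]
    have h2 : ∑ x ∈ Icc a (a + m), x.choose a = ∑ j ∈ range (m + 1), (a + j).choose a := by
      rw [← Finset.Ico_add_one_right_eq_Icc, Finset.sum_Ico_eq_sum_range,
        show a + m + 1 - a = m + 1 by omega]
    rw [← h2, Nat.sum_Icc_choose,
      show a + m + 1 = m + (a + 1) by omega, show a + 0 + m + 1 = m + (a + 1) by omega]
    exact chsy m (a + 1)
  | succ b ihb =>
    intro a m
    induction m with
    | zero => simp
    | succ m ihm =>
      have step : ∑ j ∈ range (m + 1 + 1),
          (a + j).choose j * (b + 1 + (m + 1 - j)).choose (m + 1 - j)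
          = (∑ j ∈ range (m + 1 + 1), (a + j).choose j * (b + (m + 1 - j)).choose (m + 1 - j))
            + ∑ j ∈ range (m + 1), (a + j).choose j * (b + 1 + (m - j)).choose (m - j) := by
        rw [Finset.sum_range_succ, Finset.sum_range_succ (f := fun j =>
          (a + j).choose j * (b + (m + 1 - j)).choose (m + 1 - j))]
        have hterm : ∀ j ∈ range (m + 1),
            (a + j).choose j * (b + 1 + (m + 1 - j)).choose (m + 1 - j)
            = (a + j).choose j * (b + (m + 1 - j)).choose (m + 1 - j)
              + (a + j).choose j * (b + 1 + (m - j)).choose (m - j) := by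
          intro j hj
          rw [Finset.mem_range] at hj
          have h1 : m + 1 - j = (m - j) + 1 := by omega
          rw [h1, show b + 1 + (m - j + 1) = (b + 1 + (m - j)) + 1 by omega,
            Nat.choose_succ_succ']
          rw [show b + 1 + (m - j) = b + (m - j + 1) by omega] at *
          rw [Nat.mul_add]
          ring
        rw [Finset.sum_congr rfl hterm, Finset.sum_add_distrib]
        simp
        omega
      rw [step, ihb a (m + 1), ihm,
        show a + b + (m + 1) + 1 = a + (b + 1) + m + 1 by omega, Nat.add_comm,
        ← Nat.choose_succ_succ']
      rw [show a + (b + 1) + (m + 1) + 1 = a + (b + 1) + m + 1 + 1 by omega]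

/-- `c(i,j) := C(i+j, i) · C(n+m−i−j, n−i)`. -/
def cPath (n m i j : ℕ) : ℕ := Nat.choose (i + j) i * Nat.choose (n + m - i - j) (n - i)

/-- The number of monomials of degree `d` in the multiset, counted with multiplicity. -/
def dCount (n m d : ℕ) : ℕ :=
  ∑ i ∈ Finset.range (n + 1), ∑ j ∈ Finset.range (m + 1),
    if i + j = d then cPath n m i j else 0

/-- The number of occurrences of `x_i` in the multiset. -/
def xCount (n m i : ℕ) : ℕ := ∑ j ∈ Finset.range (m + 1), cPath n m i j

/-- The number of occurrences of `y_j` in the multiset. -/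
def yCount (n m j : ℕ) : ℕ := ∑ i ∈ Finset.range (n + 1), cPath n m i j

/-- The total size `|S|` of the multiset. -/
def totCount (n m : ℕ) : ℕ :=
  ∑ i ∈ Finset.range (n + 1), ∑ j ∈ Finset.range (m + 1), cPath n m i j

lemma xCount_eq (n m i : ℕ) (hi : i ≤ n) : xCount n m i = (n + m + 1).choose m := by
  unfold xCount
  have h : ∀ j ∈ Finset.range (m + 1),
      cPath n m i j = (i + j).choose j * ((n - i) + (m - j)).choose (m - j) := by
    intro j hj
    rw [Finset.mem_range] at hj
    unfold cPath
    rw [chsy, show n + m - i - j = (n - i) + (m - j) by omega,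
      show ((n - i) + (m - j)).choose (n - i) = ((n - i) + (m - j)).choose (m - j) from
        (chsy (n - i) (m - j)).symm]
  rw [Finset.sum_congr rfl h, Lhock (n - i) i m]
  congr 1
  omega

lemma cPath_symm (n m i j : ℕ) (hi : i ≤ n) (hj : j ≤ m) : cPath n m i j = cPath m n j i := by
  unfold cPath
  rw [show j + i = i + j by omega, chsy, show m + n - j - i = n + m - i - j by omega,
    show n + m - i - j = (n - i) + (m - j) by omega, chsy]

lemma yCount_eq (n m j : ℕ) (hj : j ≤ m) : yCount n m j = (n + m + 1).choose n := by
  unfold yCount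
  have h : ∀ i ∈ Finset.range (n + 1), cPath n m i j = cPath m n j i := by
    intro i hi
    rw [Finset.mem_range] at hi
    exact cPath_symm n m i j (by omega) hj
  rw [Finset.sum_congr rfl h]
  have := xCount_eq m n j hj
  unfold xCount at this
  rw [this]
  congr 1
  omega

lemma dCount_eq (n m d : ℕ) (hd : d ≤ n + m) : dCount n m d = (n + m).choose n := by
  unfold dCount
  have h : ∀ i ∈ Finset.range (n + 1),
      (∑ j ∈ Finset.range (m + 1), if i + j = d then cPath n m i j else 0)
      = d.choose i * (n + m - d).choose (n - i) := by
    intro i hi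
    rw [Finset.mem_range] at hi
    by_cases h1 : i ≤ d
    · by_cases h2 : d - i ≤ m
      · rw [Finset.sum_eq_single (d - i)]
        · rw [if_pos (by omega)]
          unfold cPath
          congr 2 <;> omega
        · intro j hj hne
          rw [if_neg (by omega)]
        · intro hmem
          exact absurd (Finset.mem_range.mpr (by omega)) hmem
      · rw [Finset.sum_eq_zero, Nat.choose_eq_zero_of_lt (show n + m - d < n - i by omega),
          Nat.mul_zero]
        intro j hj
        rw [Finset.mem_range] at hj
        rw [if_neg (by omega)]
    · rw [Finset.sum_eq_zero, Nat.choose_eq_zero_of_lt (by omega), Nat.zero_mul]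
      intro j hj
      rw [if_neg (by omega)]
  rw [Finset.sum_congr rfl h]
  have hv := Nat.add_choose_eq d (n + m - d) n
  rw [show d + (n + m - d) = n + m by omega] at hv
  rw [hv, Finset.Nat.sum_antidiagonal_eq_sum_range_succ (f := fun x y =>
    d.choose x * (n + m - d).choose y)]

lemma totCount_eq (n m : ℕ) : totCount n m = (n + 1) * (n + m + 1).choose m := by
  unfold totCount
  have h : ∀ i ∈ Finset.range (n + 1),
      (∑ j ∈ Finset.range (m + 1), cPath n m i j) = (n + m + 1).choose m := by
    intro i hi
    rw [Finset.mem_range] at hi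
    exact xCount_eq n m i (by omega)
  rw [Finset.sum_congr rfl h, Finset.sum_const, Finset.card_range, smul_eq_mul]

/-- Lemma 5.5. -/
theorem path_lemma (n m : ℕ) :
    (∀ d d' : ℕ, d ≤ n + m → d' ≤ n + m → dCount n m d = dCount n m d') ∧
    (∀ i i' : ℕ, i ≤ n → i' ≤ n → xCount n m i = xCount n m i') ∧
    (∀ j j' : ℕ, j ≤ m → j' ≤ m → yCount n m j = yCount n m j') ∧
    (∀ d : ℕ, d ≤ n + m → (n + m + 1) * dCount n m d = totCount n m) ∧
    (∀ i : ℕ, i ≤ n → (n + 1) * xCount n m i = totCount n m) ∧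
    (∀ j : ℕ, j ≤ m → (m + 1) * yCount n m j = totCount n m) := by
  have key1 : (n + m + 1) * (n + m).choose n = (n + 1) * (n + m + 1).choose m := by
    have h := Nat.add_one_mul_choose_eq (n + m) n
    have hs : (n + m + 1).choose (n + 1) = (n + m + 1).choose m := by
      rw [show n + m + 1 = m + (n + 1) by omega]; exact chsy m (n + 1)
    rw [hs] at h
    rw [h, Nat.mul_comm]
  have key2 : (m + 1) * (n + m + 1).choose n = (n + 1) * (n + m + 1).choose m := by
    have h := Nat.add_one_mul_choose_eq (n + m) m
    have hs : (n + m + 1).choose (m + 1) = (n + m + 1).choose n := by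
      rw [show n + m + 1 = n + (m + 1) by omega]; exact chsy n (m + 1)
    have hc : (n + m).choose m = (n + m).choose n := chsy n m
    rw [hs, hc] at h
    rw [Nat.mul_comm, ← h]
    exact key1
  refine ⟨fun d d' hd hd' => by rw [dCount_eq n m d hd, dCount_eq n m d' hd'],
    fun i i' hi hi' => by rw [xCount_eq n m i hi, xCount_eq n m i' hi'],
    fun j j' hj hj' => by rw [yCount_eq n m j hj, yCount_eq n m j' hj'],
    fun d hd => by rw [dCount_eq n m d hd, totCount_eq, key1],
    fun i hi => by rw [xCount_eq n m i hi, totCount_eq],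
    fun j hj => by rw [yCount_eq n m j hj, totCount_eq, key2]⟩
end

section
/- For every integer g ≥ 3, the 3g−3 residues modulo 4g+2 of the integers 2i−4g+2 for 0 ≤ i ≤ 2g−2 and 2j−2g+3 for 0 ≤ j ≤ g−3 are pairwise distinct. (This is the content of Lemma 5.3: H⁰(C,K_C²) is a multiplicity-free representation of Aut(C) ≅ μ_{4g+2} for the Wiman curve C, with the distinguished basis compatible with the irreducible decomposition.) -/
/-!
Lemma 5.3 for the Wiman curve of genus `g ≥ 3` (multiplicity-freeness of
`H⁰(C, K_C²)` as a representation of `Aut(C) ≅ μ_{4g+2}`): the `3g−3` residues modulo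
`4g+2` of the integers `2i−4g+2` for `0 ≤ i ≤ 2g−2` and `2j−2g+3` for `0 ≤ j ≤ g−3`
are pairwise distinct.
-/

/-- Lemma 5.3: the `μ_{4g+2}`-weights of the distinguished bicanonical basis of the
Wiman curve are pairwise distinct modulo `4g+2`. -/
theorem wiman_weights_distinct (g : ℕ) (hg : 3 ≤ g) :
    Function.Injective (Sum.elim
      (fun i : Fin (2 * g - 1) => ((2 * (i : ℤ) - 4 * g + 2 : ℤ) : ZMod (4 * g + 2)))
      (fun j : Fin (g - 2) => ((2 * (j : ℤ) - 2 * g + 3 : ℤ) : ZMod (4 * g + 2)))) := by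
  rintro (a | a) (b | b) h <;>
    simp only [Sum.elim_inl, Sum.elim_inr] at h <;>
    rw [ZMod.intCast_eq_intCast_iff] at h <;>
    have hd := h.dvd <;>
    push_cast at hd <;>
    have ha := a.isLt <;>
    have hb := b.isLt
  · -- both from the first family
    have h0 : (2 * (b : ℤ) - 4 * g + 2) - (2 * (a : ℤ) - 4 * g + 2) = 0 :=
      Int.eq_zero_of_abs_lt_dvd hd (by rw [abs_lt]; constructor <;> omega)
    exact congrArg Sum.inl (Fin.ext (by omega))
  · -- cross case: parity contradiction
    have h2 : (2 : ℤ) ∣ (2 * (b : ℤ) - 2 * g + 3) - (2 * (a : ℤ) - 4 * g + 2) :=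
      dvd_trans ⟨2 * (g : ℤ) + 1, by ring⟩ hd
    obtain ⟨k, hk⟩ := h2
    omega
  · -- cross case: parity contradiction
    have h2 : (2 : ℤ) ∣ (2 * (b : ℤ) - 4 * g + 2) - (2 * (a : ℤ) - 2 * g + 3) :=
      dvd_trans ⟨2 * (g : ℤ) + 1, by ring⟩ hd
    obtain ⟨k, hk⟩ := h2
    omega
  · -- both from the second family
    have h0 : (2 * (b : ℤ) - 2 * g + 3) - (2 * (a : ℤ) - 2 * g + 3) = 0 :=
      Int.eq_zero_of_abs_lt_dvd hd (by rw [abs_lt]; constructor <;> omega)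
    exact congrArg Sum.inr (Fin.ext (by omega))
end

section
/- For all integers g ≥ 3 and m ≥ 2, there exists a Type I multibasis (c₁, c₂, s) that is balanced with the following occurrence counts: the combined occurrence count Σ_{(a,b)} c₁(a,b)·a(i) + Σ_{(a,b)} c₂(a,b)·a(i) equals s·((4g−4)m² − (3g−3)m + g)/(2g−1) for every i ∈ {0,…,2g−2}, and the occurrence count Σ_{(a,b)} c₂(a,b)·b(j) equals s·((2g−2)m − g)/(g−2) for every j ∈ {0,…,g−3}. (Proposition 5.9: there is a Type I multibasis of H⁰(C,O_C(m)) for the bicanonical Wiman curve whose weight is (((4g−4)m²−(3g−3)m+g)/(2g−1))·Λ + (((2g−2)m−g)/(g−2))·N, where Λ and N are the total x- and y-weights.) -/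
/-!
Proposition 5.9 for the bicanonically embedded Wiman curve `w² = z^(2g+1)+1` of genus
`g ≥ 3`: for every `m ≥ 2` there is a balanced Type I multibasis `(c₁, c₂, s)` of
`H⁰(C, O_C(m)) ≅ W(m,0) ⊕ W(m−1,1)`.  Here `c₁` counts `(m,0)`-monomials, `c₂` counts
`(m−1,1)`-monomials, each `z`-degree in the respective ranges is realized exactly `s`
times, and the occurrence counts are balanced with the combined `x`-occurrence count
equal to `s·((4g−4)m² − (3g−3)m + g)/(2g−1)` for every `x`-variable and the
`y`-occurrence count equal to `s·((2g−2)m − g)/(g−2)` for every `y`-variable (stated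
multiplicatively over `ℤ` to avoid division).
-/

open scoped Classical

/-- `(k, r)`-monomials for the Wiman curve of genus `g`: a multiset of `k` `x`-indices
in `{0,…,2g−2}` together with a multiset of `r` `y`-indices in `{0,…,g−3}`. -/
abbrev WMon (g k r : ℕ) := Sym (Fin (2 * g - 1)) k × Sym (Fin (g - 2)) r

/-- The `z`-degree `Σ i·a(i) + Σ j·b(j)` of a Wiman monomial. -/
def zdeg {g k r : ℕ} (p : WMon g k r) : ℕ :=
  (p.1.1.map (fun i : Fin (2 * g - 1) => (i : ℕ))).sum +
    (p.2.1.map (fun j : Fin (g - 2) => (j : ℕ))).sum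


namespace WimanPf




theorem sum_range_add' (f : ℕ → ℕ) (a b : ℕ) :
    ∑ i ∈ Finset.range (a + b), f i
      = (∑ i ∈ Finset.range a, f i) + ∑ j ∈ Finset.range b, f (a + j) := by
  induction b with
  | zero => simp
  | succ b ih =>
      rw [Nat.add_succ, Finset.sum_range_succ, ih, Finset.sum_range_succ, add_assoc]

theorem sum_range_mul (f : ℕ → ℕ) (a b : ℕ) :
    ∑ d ∈ Finset.range (a * b), f d
      = ∑ q ∈ Finset.range a, ∑ r ∈ Finset.range b, f (q * b + r) := by
  induction a with
  | zero => simp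
  | succ a ih =>
      rw [Nat.succ_mul, sum_range_add' f (a*b) b, ih, Finset.sum_range_succ]

theorem hstick (b r : ℕ) :
    ∑ k ∈ Finset.range (r+1), Nat.choose (b + k) k = Nat.choose (b + r + 1) r := by
  induction r with
  | zero => simp
  | succ r ih =>
      rw [Finset.sum_range_succ, ih, show b + (r+1) + 1 = (b + r + 1) + 1 by omega,
        Nat.choose_succ_succ (b + r + 1) r, show b + (r+1) = b + r + 1 by omega]

theorem vand : ∀ (a r b : ℕ),
    ∑ e ∈ Finset.range (r+1), Nat.choose (a + e) e * Nat.choose (b + (r - e)) (r - e)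
      = Nat.choose (a + b + r + 1) r := by
  intro a
  induction a with
  | zero =>
      intro r b
      calc ∑ e ∈ Finset.range (r+1), Nat.choose (0 + e) e * Nat.choose (b + (r - e)) (r - e)
          = ∑ e ∈ Finset.range (r+1), Nat.choose (b + (r - e)) (r - e) := by
            refine Finset.sum_congr rfl fun e _ => by rw [zero_add, Nat.choose_self, one_mul]
        _ = ∑ e ∈ Finset.range (r+1), Nat.choose (b + ((r+1) - 1 - e)) ((r+1) - 1 - e) := by
            refine Finset.sum_congr rfl fun e he => by
              have : (r+1) - 1 - e = r - e := by omega
              rw [this]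
        _ = ∑ e ∈ Finset.range (r+1), Nat.choose (b + e) e :=
            Finset.sum_range_reflect (fun k => Nat.choose (b + k) k) (r+1)
        _ = Nat.choose (b + r + 1) r := hstick b r
        _ = Nat.choose (0 + b + r + 1) r := by rw [zero_add]
  | succ a ih =>
      intro r
      induction r with
      | zero => intro b; simp
      | succ r ihr =>
          intro b
          have peel := Finset.sum_range_succ'
            (fun e => Nat.choose (a + 1 + e) e * Nat.choose (b + (r + 1 - e)) (r + 1 - e)) (r+1)
          rw [peel]
          have congr1 : ∀ e ∈ Finset.range (r+1),
              Nat.choose (a + 1 + (e+1)) (e+1) * Nat.choose (b + (r + 1 - (e+1))) (r + 1 - (e+1))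
                = Nat.choose (a + 1 + e) e * Nat.choose (b + (r - e)) (r - e)
                  + Nat.choose (a + (e+1)) (e+1) * Nat.choose (b + (r - e)) (r - e) := by
            intro e he
            have h1 : r + 1 - (e+1) = r - e := by omega
            have h2 : a + 1 + (e+1) = (a + 1 + e) + 1 := by omega
            rw [h1, h2, Nat.choose_succ_succ (a + 1 + e) e, add_mul,
              show a + 1 + e = a + (e+1) by omega]
          rw [Finset.sum_congr rfl congr1, Finset.sum_add_distrib]
          have hT1 := ihr b
          have hT2 := ih (r+1) b
          rw [Finset.sum_range_succ'
            (fun e => Nat.choose (a + e) e * Nat.choose (b + (r + 1 - e)) (r + 1 - e)) (r+1)] at hT2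
          have congr2 : ∀ e ∈ Finset.range (r+1),
              Nat.choose (a + (e+1)) (e+1) * Nat.choose (b + (r + 1 - (e+1))) (r + 1 - (e+1))
                = Nat.choose (a + (e+1)) (e+1) * Nat.choose (b + (r - e)) (r - e) := by
            intro e he
            have h1 : r + 1 - (e+1) = r - e := by omega
            rw [h1]
          rw [Finset.sum_congr rfl congr2] at hT2
          simp only [Nat.choose_zero_right, one_mul, Nat.add_zero, Nat.sub_zero] at hT2 ⊢
          -- hT2 : Σ C(a+(e+1), e+1) C(b+(r-e), r-e) + C(a,0)*C(b+(r+1), r+1) = C(a+b+(r+1)+1, r+1)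
          have goalrhs : Nat.choose (a + 1 + b + (r + 1) + 1) (r+1)
              = Nat.choose (a + 1 + b + r + 1) r + Nat.choose (a + 1 + b + r + 1) (r+1) := by
            rw [show a + 1 + b + (r+1) + 1 = (a + 1 + b + r + 1) + 1 by omega,
              Nat.choose_succ_succ (a + 1 + b + r + 1) r]
          rw [goalrhs, ← hT1]
          have : a + b + (r + 1) + 1 = a + 1 + b + r + 1 := by omega
          rw [this] at hT2
          omega




/-- the cell weight -/
def Nw (H X j e : ℕ) : ℕ := Nat.choose (e + j) j * Nat.choose ((X - e) + (H - j)) (H - j)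

theorem colsum (H X e : ℕ) (he : e ≤ X) :
    ∑ j ∈ Finset.range (H+1), Nw H X j e = Nat.choose (X + H + 1) H := by
  have h := vand e H (X - e)
  have congr1 : ∀ j ∈ Finset.range (H+1),
      Nw H X j e = Nat.choose (e + j) j * Nat.choose ((X - e) + (H - j)) (H - j) := fun j _ => rfl
  rw [Finset.sum_congr rfl congr1]
  rw [h, show e + (X - e) + H + 1 = X + H + 1 by omega]

theorem rowsum (H X j : ℕ) (hj : j ≤ H) :
    ∑ e ∈ Finset.range (X+1), Nw H X j e = Nat.choose (X + H + 1) X := by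
  have h := vand j X (H - j)
  have congr1 : ∀ e ∈ Finset.range (X+1),
      Nw H X j e = Nat.choose (j + e) e * Nat.choose ((H - j) + (X - e)) (X - e) := by
    intro e he
    unfold Nw
    have h1 : Nat.choose (e + j) j = Nat.choose (j + e) e := by
      rw [add_comm e j]
      have := Nat.choose_symm (show j ≤ j + e by omega)
      rw [show j + e - j = e by omega] at this
      rw [this]
    have h2 : Nat.choose ((X - e) + (H - j)) (H - j)
        = Nat.choose ((H - j) + (X - e)) (X - e) := by
      rw [add_comm (X - e) (H - j)]
      have := Nat.choose_symm (show (H - j) ≤ (H - j) + (X - e) by omega)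
      rw [show (H - j) + (X - e) - (H - j) = X - e by omega] at this
      rw [this]
    rw [h1, h2]
  rw [Finset.sum_congr rfl congr1, h, show j + (H - j) + X + 1 = X + H + 1 by omega]

theorem diag (H X d : ℕ) (hd : d ≤ X + H) :
    ∑ j ∈ Finset.range (H+1), ∑ e ∈ Finset.range (X+1),
      Nw H X j e * (if e + j = d then 1 else 0)
      = Nat.choose (X + H) H := by
  have inner : ∀ j ∈ Finset.range (H+1),
      (∑ e ∈ Finset.range (X+1), Nw H X j e * (if e + j = d then 1 else 0))
        = Nat.choose d j * Nat.choose (X + H - d) (H - j) := by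
    intro j hj
    rw [Finset.mem_range] at hj
    by_cases hc : j ≤ d ∧ d - j ≤ X
    · rw [Finset.sum_eq_single (d - j)]
      · rw [if_pos (by omega), mul_one]
        unfold Nw
        obtain ⟨h1, h2⟩ := hc
        have k1 : d - j + j = d := by omega
        have k2 : X - (d - j) + (H - j) = X + H - d := by omega
        rw [k1, k2]
      · intro b hb hne
        rw [Finset.mem_range] at hb
        rw [if_neg (by omega), mul_zero]
      · intro hmem
        exact absurd (Finset.mem_range.2 (by omega)) hmem
    · rw [Finset.sum_eq_zero, eq_comm]
      · rcases Nat.lt_or_ge d j with h | h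
        · rw [Nat.choose_eq_zero_of_lt h, zero_mul]
        · have : X + H - d < H - j := by omega
          rw [Nat.choose_eq_zero_of_lt this, mul_zero]
      · intro e he
        rw [Finset.mem_range] at he
        rw [if_neg (by omega), mul_zero]
  rw [Finset.sum_congr rfl inner]
  have hv := Nat.add_choose_eq d (X + H - d) H
  rw [Finset.Nat.sum_antidiagonal_eq_sum_range_succ_mk] at hv
  rw [show d + (X + H - d) = X + H by omega] at hv
  rw [← hv]





variable {g : ℕ}

def xl (hg : 3 ≤ g) (a : ℕ) : Fin (2 * g - 1) := ⟨min a (2*g-2), by omega⟩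

lemma coe_xl (hg : 3 ≤ g) {a : ℕ} (ha : a ≤ 2*g-2) : ((xl hg a : Fin (2*g-1)) : ℕ) = a := by
  simp only [xl]
  omega

def yl (hg : 3 ≤ g) (b : ℕ) : Fin (g - 2) := ⟨min b (g-3), by omega⟩

lemma coe_yl (hg : 3 ≤ g) {b : ℕ} (hb : b ≤ g-3) : ((yl hg b : Fin (g-2)) : ℕ) = b := by
  simp only [yl]; omega

def PM (hg : 3 ≤ g) (k d : ℕ) : Multiset (Fin (2*g-1)) :=
  Multiset.replicate (k - d % k) (xl hg (d / k)) + Multiset.replicate (d % k) (xl hg (d / k + 1))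

lemma PM_card (hg : 3 ≤ g) {k : ℕ} (hk : 1 ≤ k) (d : ℕ) : Multiset.card (PM hg k d) = k := by
  have := Nat.mod_lt d (show 0 < k by omega)
  simp only [PM, Multiset.card_add, Multiset.card_replicate]
  omega

lemma div_le_PM (hg : 3 ≤ g) {k d : ℕ} (hk : 1 ≤ k) (hd : d ≤ (2*g-2)*k) : d / k ≤ 2*g-2 := by
  have h := Nat.div_le_div_right (c := k) hd
  rwa [Nat.mul_div_cancel _ (show 0 < k by omega)] at h

lemma div_lt_PM (hg : 3 ≤ g) {k d : ℕ} (hk : 1 ≤ k) (hd : d ≤ (2*g-2)*k) (hr : d % k ≠ 0) :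
    d / k + 1 ≤ 2*g-2 := by
  have hlt : d < (2*g-2)*k := by
    rcases Nat.lt_or_ge d ((2*g-2)*k) with h | h
    · exact h
    · have : d = (2*g-2)*k := by omega
      subst this
      exact absurd (Nat.mul_mod_left _ _) hr
  have := (Nat.div_lt_iff_lt_mul (show 0 < k by omega)).2 (by omega : d < (2*g-2) * k)
  omega

lemma PM_sum (hg : 3 ≤ g) {k d : ℕ} (hk : 1 ≤ k) (hd : d ≤ (2*g-2)*k) :
    ((PM hg k d).map (fun i : Fin (2*g-1) => (i:ℕ))).sum = d := by
  have hq := div_le_PM hg hk hd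
  have hdm := Nat.div_add_mod d k
  by_cases hr : d % k = 0
  · simp only [PM, hr, Multiset.replicate_zero, add_zero, Nat.sub_zero,
      Multiset.map_replicate, Multiset.sum_replicate, smul_eq_mul, coe_xl hg hq]
    omega
  · have hq1 := div_lt_PM hg hk hd hr
    simp only [PM, Multiset.map_add, Multiset.map_replicate, Multiset.sum_add,
      Multiset.sum_replicate, smul_eq_mul, coe_xl hg hq, coe_xl hg hq1]
    have h2 : d % k ≤ k := le_of_lt (Nat.mod_lt d (show 0 < k by omega))
    calc (k - d % k) * (d / k) + d % k * (d / k + 1)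
        = ((k - d % k) * (d / k) + d % k * (d / k)) + d % k := by ring
      _ = k * (d / k) + d % k := by rw [← add_mul, Nat.sub_add_cancel h2]
      _ = d := hdm

lemma PM_count (hg : 3 ≤ g) {k d : ℕ} (hk : 1 ≤ k) (hd : d ≤ (2*g-2)*k) (i : Fin (2*g-1)) :
    Multiset.count i (PM hg k d)
      = (k - d % k) * (if (i:ℕ) = d / k then 1 else 0)
        + (d % k) * (if (i:ℕ) = d / k + 1 then 1 else 0) := by
  have hq := div_le_PM hg hk hd
  simp only [PM, Multiset.count_add, Multiset.count_replicate]
  have e1 : ((xl hg (d/k)) = i) ↔ ((i:ℕ) = d / k) := by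
    rw [Fin.ext_iff, coe_xl hg hq, eq_comm]
  by_cases hr : d % k = 0
  · rw [hr, if_congr e1 rfl rfl]
    split_ifs <;> simp
  · have hq1 := div_lt_PM hg hk hd hr
    have e2 : ((xl hg (d/k+1)) = i) ↔ ((i:ℕ) = d / k + 1) := by
      rw [Fin.ext_iff, coe_xl hg hq1, eq_comm]
    rw [if_congr e1 rfl rfl, if_congr e2 rfl rfl]
    split_ifs <;> ring


noncomputable def RM (hg : 3 ≤ g) (k d : ℕ) : Multiset (Fin (2*g-1)) :=
  if d = (2*g-2)*k then Multiset.replicate k (xl hg (2*g-2))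
  else Multiset.replicate (min (d / (2*g-2)) (k-1)) (xl hg (2*g-2))
        + {xl hg (d % (2*g-2))}
        + Multiset.replicate (k - 1 - min (d / (2*g-2)) (k-1)) (xl hg 0)

lemma RM_card (hg : 3 ≤ g) {k : ℕ} (hk : 1 ≤ k) (d : ℕ) : Multiset.card (RM hg k d) = k := by
  unfold RM
  split_ifs with h
  · rw [Multiset.card_replicate]
  · simp only [Multiset.card_add, Multiset.card_replicate, Multiset.card_singleton]
    have : min (d / (2*g-2)) (k-1) ≤ k - 1 := Nat.min_le_right _ _
    omega

lemma RM_div_lt (hg : 3 ≤ g) {k d : ℕ} (hd : d < (2*g-2)*k) : d / (2*g-2) < k := by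
  exact (Nat.div_lt_iff_lt_mul (show 0 < 2*g-2 by omega)).2 (by rw [mul_comm]; exact hd)

lemma RM_sum (hg : 3 ≤ g) {k d : ℕ} (hk : 1 ≤ k) (hd : d ≤ (2*g-2)*k) :
    ((RM hg k d).map (fun i : Fin (2*g-1) => (i:ℕ))).sum = d := by
  unfold RM
  split_ifs with h
  · simp only [Multiset.map_replicate, Multiset.sum_replicate, smul_eq_mul,
      coe_xl hg (le_refl (2*g-2))]
    rw [h, mul_comm]
  · have hlt : d < (2*g-2)*k := by omega
    have hq := RM_div_lt hg hlt
    have hmin : min (d / (2*g-2)) (k-1) = d / (2*g-2) := by omega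
    have hmod : d % (2*g-2) ≤ 2*g-2 := le_of_lt (Nat.mod_lt d (by omega))
    have hdm := Nat.div_add_mod d (2*g-2)
    rw [hmin]
    simp only [Multiset.map_add, Multiset.map_replicate, Multiset.map_singleton,
      Multiset.sum_add, Multiset.sum_replicate, Multiset.sum_singleton, smul_eq_mul,
      coe_xl hg (le_refl (2*g-2)), coe_xl hg hmod, coe_xl hg (show 0 ≤ 2*g-2 by omega)]
    rw [mul_zero, add_zero, mul_comm]; exact hdm

lemma RM_count (hg : 3 ≤ g) {k d : ℕ} (hk : 1 ≤ k) (hd : d < (2*g-2)*k) (i : Fin (2*g-1)) :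
    Multiset.count i (RM hg k d)
      = (d / (2*g-2)) * (if (i:ℕ) = 2*g-2 then 1 else 0)
        + (if (i:ℕ) = d % (2*g-2) then 1 else 0)
        + (k - 1 - d / (2*g-2)) * (if (i:ℕ) = 0 then 1 else 0) := by
  have hq := RM_div_lt hg hd
  have hmin : min (d / (2*g-2)) (k-1) = d / (2*g-2) := by omega
  have hmod : d % (2*g-2) ≤ 2*g-2 := le_of_lt (Nat.mod_lt d (by omega))
  unfold RM
  rw [if_neg (by omega), hmin]
  simp only [Multiset.count_add, Multiset.count_replicate, Multiset.count_singleton]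
  have e1 : ((xl hg (2*g-2)) = i) ↔ ((i:ℕ) = 2*g-2) := by
    rw [Fin.ext_iff, coe_xl hg (le_refl _), eq_comm]
  have e2 : (i = (xl hg (d % (2*g-2)))) ↔ ((i:ℕ) = d % (2*g-2)) := by
    rw [Fin.ext_iff, coe_xl hg hmod]
  have e3 : ((xl hg 0) = i) ↔ ((i:ℕ) = 0) := by
    rw [Fin.ext_iff, coe_xl hg (show 0 ≤ 2*g-2 by omega), eq_comm]
  rw [if_congr e1 rfl rfl, if_congr e2 rfl rfl, if_congr e3 rfl rfl]
  split_ifs <;> ring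

lemma RM_count_top (hg : 3 ≤ g) {k : ℕ} (hk : 1 ≤ k) (i : Fin (2*g-1)) :
    Multiset.count i (RM hg k ((2*g-2)*k)) = k * (if (i:ℕ) = 2*g-2 then 1 else 0) := by
  unfold RM
  rw [if_pos rfl, Multiset.count_replicate]
  have e1 : ((xl hg (2*g-2)) = i) ↔ ((i:ℕ) = 2*g-2) := by
    rw [Fin.ext_iff, coe_xl hg (le_refl _), eq_comm]
  rw [if_congr e1 rfl rfl]
  split_ifs <;> ring

namespace Crux

lemma sum_indicator_range (N a w : ℕ) :
    (∑ q ∈ Finset.range N, if a = q then w else 0) = if a < N then w else 0 := by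
  have h1 : ∀ q ∈ Finset.range N, (if a = q then w else 0) = (if q = a then w else 0) :=
    fun q _ => if_congr eq_comm rfl rfl
  rw [Finset.sum_congr rfl h1, Finset.sum_ite_eq' (Finset.range N) a (fun _ => w)]
  simp [Finset.mem_range]

lemma sum_ite_const {c : Prop} [Decidable c] (f : ℕ → ℕ) (s : Finset ℕ) :
    (∑ x ∈ s, if c then f x else 0) = if c then ∑ x ∈ s, f x else 0 := by
  split_ifs <;> simp

end Crux

open Crux in
lemma crux1 (hg : 3 ≤ g) {k : ℕ} (hk : 1 ≤ k) (i : Fin (2*g-1)) :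
    ∑ d ∈ Finset.range ((2*g-2)*k + 1),
      ((2*g-2) * Multiset.count i (PM hg k d) + Multiset.count i (RM hg k d))
      = (2*g-2)*(k*k) + k := by
  have hilt : (i:ℕ) ≤ 2*g-2 := by have := i.isLt; omega
  set u₁ := ∑ r ∈ Finset.range k, (k - r) with hu₁
  set u₂ := ∑ r ∈ Finset.range k, r with hu₂
  have hu12 : u₁ + u₂ = k*k := by
    rw [hu₁, hu₂, ← Finset.sum_add_distrib]
    have : ∀ r ∈ Finset.range k, (k - r) + r = k := by
      intro r hr; rw [Finset.mem_range] at hr; omega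
    rw [Finset.sum_congr rfl this, Finset.sum_const, Finset.card_range, smul_eq_mul]
  have hu2k : u₂ * 2 + k = k * k := by
    have h1 := Finset.sum_range_id_mul_two k
    obtain ⟨t, rfl⟩ : ∃ t, k = t + 1 := ⟨k - 1, by omega⟩
    rw [hu₂, h1]
    simp only [Nat.add_sub_cancel]
    ring
  have hu3 : (∑ q ∈ Finset.range k, (k - 1 - q)) = u₂ :=
    Finset.sum_range_reflect (fun x => x) k
  -- peel top term
  rw [Finset.sum_range_succ, Finset.sum_add_distrib]
  -- top values
  have htopP : Multiset.count i (PM hg k ((2*g-2)*k)) = k * (if (i:ℕ) = 2*g-2 then 1 else 0) := by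
    have e1 : ((2*g-2)*k) / k = 2*g-2 := Nat.mul_div_cancel _ (by omega)
    have e2 : ((2*g-2)*k) % k = 0 := Nat.mul_mod_left _ _
    rw [PM_count hg hk (le_refl _) i, e1, e2]
    split_ifs <;> simp
  have htopR := RM_count_top hg hk i
  -- main P sum
  have hSP : (∑ d ∈ Finset.range ((2*g-2)*k), Multiset.count i (PM hg k d))
      = (if (i:ℕ) < 2*g-2 then u₁ else 0) + (if (i:ℕ) = 0 then 0 else u₂) := by
    rw [sum_range_mul _ (2*g-2) k]
    have step1 : ∀ q ∈ Finset.range (2*g-2), ∀ r ∈ Finset.range k,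
        Multiset.count i (PM hg k (q*k+r))
          = (if (i:ℕ) = q then (k - r) else 0) + (if (i:ℕ) = q + 1 then r else 0) := by
      intro q hq r hr
      rw [Finset.mem_range] at hq hr
      have hd : q*k + r ≤ (2*g-2)*k := by
        have h1 : q*k + r < (q+1)*k := by
          have : (q+1)*k = q*k + k := by ring
          omega
        have h2 : (q+1)*k ≤ (2*g-2)*k := Nat.mul_le_mul_right k (by omega)
        omega
      have ed : (q*k + r)/k = q := by
        rw [mul_comm, Nat.mul_add_div (by omega), Nat.div_eq_of_lt hr, add_zero]
      have em : (q*k + r)%k = r := by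
        rw [mul_comm, Nat.mul_add_mod, Nat.mod_eq_of_lt hr]
      rw [PM_count hg hk hd i, ed, em]
      split_ifs <;> ring
    have step2 : ∀ q ∈ Finset.range (2*g-2),
        (∑ r ∈ Finset.range k, Multiset.count i (PM hg k (q*k+r)))
          = (if (i:ℕ) = q then u₁ else 0) + (if (i:ℕ) = q + 1 then u₂ else 0) := by
      intro q hq
      rw [Finset.sum_congr rfl (step1 q hq), Finset.sum_add_distrib,
        sum_ite_const (fun r => k - r) (Finset.range k),
        sum_ite_const (fun r => r) (Finset.range k)]
    rw [Finset.sum_congr rfl step2, Finset.sum_add_distrib, sum_indicator_range]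
    congr 1
    by_cases h0 : (i:ℕ) = 0
    · rw [if_pos h0, Finset.sum_eq_zero]
      intro q hq
      rw [if_neg (by omega)]
    · rw [if_neg h0]
      have h2 : ∀ q ∈ Finset.range (2*g-2),
          (if (i:ℕ) = q + 1 then u₂ else 0) = (if q = (i:ℕ) - 1 then u₂ else 0) :=
        fun q _ => if_congr (by omega) rfl rfl
      rw [Finset.sum_congr rfl h2, Finset.sum_ite_eq' (Finset.range (2*g-2)) ((i:ℕ)-1) (fun _ => u₂),
        if_pos (Finset.mem_range.2 (by omega))]
  -- main R sum
  have hSR : (∑ d ∈ Finset.range ((2*g-2)*k), Multiset.count i (RM hg k d))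
      = (if (i:ℕ) = 2*g-2 then (2*g-2)*u₂ else 0) + (if (i:ℕ) < 2*g-2 then k else 0)
        + (if (i:ℕ) = 0 then (2*g-2)*u₂ else 0) := by
    rw [mul_comm (2*g-2) k, sum_range_mul _ k (2*g-2)]
    have step1 : ∀ q ∈ Finset.range k,
        (∑ r ∈ Finset.range (2*g-2), Multiset.count i (RM hg k (q*(2*g-2)+r)))
          = ((if (i:ℕ) = 2*g-2 then (2*g-2)*q else 0) + (if (i:ℕ) < 2*g-2 then 1 else 0)
              + (if (i:ℕ) = 0 then (2*g-2)*(k-1-q) else 0)) := by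
      intro q hq
      rw [Finset.mem_range] at hq
      have inner : ∀ r ∈ Finset.range (2*g-2),
          Multiset.count i (RM hg k (q*(2*g-2)+r))
            = ((if (i:ℕ) = 2*g-2 then q else 0) + (if (i:ℕ) = r then 1 else 0)
                + (if (i:ℕ) = 0 then (k-1-q) else 0)) := by
        intro r hr
        rw [Finset.mem_range] at hr
        have hd : q*(2*g-2) + r < (2*g-2)*k := by
          have h1 : q*(2*g-2) + r < (q+1)*(2*g-2) := by
            have : (q+1)*(2*g-2) = q*(2*g-2) + (2*g-2) := by ring
            omega
          have h2 : (q+1)*(2*g-2) ≤ k*(2*g-2) := Nat.mul_le_mul_right _ (by omega)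
          rw [mul_comm k (2*g-2)] at h2
          omega
        have ed : (q*(2*g-2) + r)/(2*g-2) = q := by
          rw [mul_comm, Nat.mul_add_div (by omega), Nat.div_eq_of_lt hr, add_zero]
        have em : (q*(2*g-2) + r)%(2*g-2) = r := by
          rw [mul_comm, Nat.mul_add_mod, Nat.mod_eq_of_lt hr]
        rw [RM_count hg hk hd i, ed, em]
        split_ifs <;> ring
      rw [Finset.sum_congr rfl inner, Finset.sum_add_distrib, Finset.sum_add_distrib,
        sum_ite_const (fun _ => q) (Finset.range (2*g-2)),
        sum_ite_const (fun _ => k-1-q) (Finset.range (2*g-2)),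
        sum_indicator_range (2*g-2) (i:ℕ) 1]
      simp only [Finset.sum_const, Finset.card_range, smul_eq_mul]
    rw [Finset.sum_congr rfl step1, Finset.sum_add_distrib, Finset.sum_add_distrib,
      sum_ite_const (fun q => (2*g-2)*q) (Finset.range k),
      sum_ite_const (fun q => (2*g-2)*(k-1-q)) (Finset.range k),
      sum_ite_const (fun _ => (1:ℕ)) (Finset.range k)]
    have e1 : (∑ q ∈ Finset.range k, (2*g-2)*q) = (2*g-2)*u₂ := by rw [← Finset.mul_sum]
    have e2 : (∑ q ∈ Finset.range k, (2*g-2)*(k-1-q)) = (2*g-2)*u₂ := by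
      rw [← Finset.mul_sum, hu3]
    have e3 : (∑ _q ∈ Finset.range k, (1:ℕ)) = k := by simp
    rw [e1, e2, e3]
  rw [← Finset.mul_sum, hSP, hSR, htopP, htopR]
  have E1 : (2*g-2)*u₁ + (2*g-2)*u₂ + k = (2*g-2)*(k*k) + k := by
    rw [← Nat.mul_add, hu12]
  have E2 : (2*g-2)*u₂ + (2*g-2)*u₂ + (2*g-2)*k + k = (2*g-2)*(k*k) + k := by
    have h5 : u₂ + u₂ + k = k * k := by omega
    rw [← Nat.mul_add, ← Nat.mul_add, h5]
  have c23 : ¬((2:ℕ)*g-2 = 0) := by omega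
  split_ifs with c1 c2 c3 <;> [skip; skip; skip; skip; skip; skip; skip; skip] <;>
    first
      | omega
      | linarith [E1, E2]



-- === designs and assembly ===

noncomputable def PS {g : ℕ} (hg : 3 ≤ g) (k : ℕ) (hk : 1 ≤ k) (d : ℕ) :
    Sym (Fin (2*g-1)) k := ⟨PM hg k d, PM_card hg hk d⟩

noncomputable def RS {g : ℕ} (hg : 3 ≤ g) (k : ℕ) (hk : 1 ≤ k) (d : ℕ) :
    Sym (Fin (2*g-1)) k := ⟨RM hg k d, RM_card hg hk d⟩

noncomputable def mono1P (g m : ℕ) (hg : 3 ≤ g) (hm : 2 ≤ m) (d : ℕ) : WMon g m 0 :=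
  (PS hg m (by omega) d, ⟨0, Multiset.card_zero⟩)

noncomputable def mono1R (g m : ℕ) (hg : 3 ≤ g) (hm : 2 ≤ m) (d : ℕ) : WMon g m 0 :=
  (RS hg m (by omega) d, ⟨0, Multiset.card_zero⟩)

noncomputable def mono2P (g m : ℕ) (hg : 3 ≤ g) (hm : 2 ≤ m) (j e : ℕ) : WMon g (m-1) 1 :=
  (PS hg (m-1) (by omega) e, ⟨{yl hg j}, Multiset.card_singleton _⟩)

noncomputable def mono2R (g m : ℕ) (hg : 3 ≤ g) (hm : 2 ≤ m) (j e : ℕ) : WMon g (m-1) 1 :=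
  (RS hg (m-1) (by omega) e, ⟨{yl hg j}, Multiset.card_singleton _⟩)

lemma zdeg_mono1P (g m : ℕ) (hg : 3 ≤ g) (hm : 2 ≤ m) {d : ℕ} (hd : d ≤ (2*g-2)*m) :
    zdeg (mono1P g m hg hm d) = d := by
  show ((PM hg m d).map _).sum + ((0 : Multiset (Fin (g-2))).map _).sum = d
  rw [Multiset.map_zero, Multiset.sum_zero, add_zero]
  exact PM_sum hg (by omega) hd

lemma zdeg_mono1R (g m : ℕ) (hg : 3 ≤ g) (hm : 2 ≤ m) {d : ℕ} (hd : d ≤ (2*g-2)*m) :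
    zdeg (mono1R g m hg hm d) = d := by
  show ((RM hg m d).map _).sum + ((0 : Multiset (Fin (g-2))).map _).sum = d
  rw [Multiset.map_zero, Multiset.sum_zero, add_zero]
  exact RM_sum hg (by omega) hd

lemma zdeg_mono2P (g m : ℕ) (hg : 3 ≤ g) (hm : 2 ≤ m) {j e : ℕ} (hj : j ≤ g-3)
    (he : e ≤ (2*g-2)*(m-1)) : zdeg (mono2P g m hg hm j e) = e + j := by
  show ((PM hg (m-1) e).map _).sum + (({yl hg j} : Multiset (Fin (g-2))).map _).sum = e + j
  rw [Multiset.map_singleton, Multiset.sum_singleton, PM_sum hg (by omega) he, coe_yl hg hj]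

lemma zdeg_mono2R (g m : ℕ) (hg : 3 ≤ g) (hm : 2 ≤ m) {j e : ℕ} (hj : j ≤ g-3)
    (he : e ≤ (2*g-2)*(m-1)) : zdeg (mono2R g m hg hm j e) = e + j := by
  show ((RM hg (m-1) e).map _).sum + (({yl hg j} : Multiset (Fin (g-2))).map _).sum = e + j
  rw [Multiset.map_singleton, Multiset.sum_singleton, RM_sum hg (by omega) he, coe_yl hg hj]

lemma dsum_mul {g k r : ℕ} {ι : Type} (I : Finset ι) (w : ι → ℕ) (mono : ι → WMon g k r)
    (F : WMon g k r → ℕ) :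
    (∑ p : WMon g k r, (∑ x ∈ I, w x * (if mono x = p then 1 else 0)) * F p)
      = ∑ x ∈ I, w x * F (mono x) := by
  have h1 : ∀ p ∈ (Finset.univ : Finset (WMon g k r)),
      (∑ x ∈ I, w x * (if mono x = p then 1 else 0)) * F p
        = ∑ x ∈ I, w x * (if mono x = p then 1 else 0) * F p :=
    fun p _ => Finset.sum_mul _ _ _
  rw [Finset.sum_congr rfl h1, Finset.sum_comm]
  refine Finset.sum_congr rfl fun x _ => ?_
  rw [Finset.sum_eq_single (mono x)]
  · rw [if_pos rfl, mul_one]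
  · intro p _ hne
    rw [if_neg (fun h => hne h.symm), mul_zero, zero_mul]
  · intro h; exact absurd (Finset.mem_univ _) h

lemma dsum_filter {g k r : ℕ} {ι : Type} (I : Finset ι) (w : ι → ℕ) (mono : ι → WMon g k r)
    (d : ℕ) :
    (∑ p ∈ Finset.univ.filter (fun p : WMon g k r => zdeg p = d),
        (∑ x ∈ I, w x * (if mono x = p then 1 else 0)))
      = ∑ x ∈ I, w x * (if zdeg (mono x) = d then 1 else 0) := by
  rw [Finset.sum_filter]
  have h1 : ∀ p ∈ (Finset.univ : Finset (WMon g k r)),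
      (if zdeg p = d then (∑ x ∈ I, w x * (if mono x = p then 1 else 0)) else 0)
        = (∑ x ∈ I, w x * (if mono x = p then 1 else 0)) * (if zdeg p = d then 1 else 0) := by
    intro p _; split_ifs <;> simp
  rw [Finset.sum_congr rfl h1, dsum_mul I w mono (fun p => if zdeg p = d then 1 else 0)]

def Hv (g : ℕ) : ℕ := g - 3
def Xv (g m : ℕ) : ℕ := (2*g-2)*(m-1)
def NwD (g m : ℕ) (j e : ℕ) : ℕ := Nw (Hv g) (Xv g m) j e
def Sv (g m : ℕ) : ℕ := Nat.choose (Xv g m + Hv g) (Hv g)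
def Kv (g m : ℕ) : ℕ := Nat.choose (Xv g m + Hv g + 1) (Hv g)
def Rv (g m : ℕ) : ℕ := Nat.choose (Xv g m + Hv g + 1) (Xv g m)

noncomputable def c1 (g m : ℕ) (hg : 3 ≤ g) (hm : 2 ≤ m) : WMon g m 0 → ℕ := fun p =>
  (∑ d ∈ Finset.range ((2*g-2)*m + 1),
      (Sv g m * (2*g-2)) * (if mono1P g m hg hm d = p then 1 else 0))
  + (∑ d ∈ Finset.range ((2*g-2)*m + 1),
      (Sv g m) * (if mono1R g m hg hm d = p then 1 else 0))

noncomputable def c2 (g m : ℕ) (hg : 3 ≤ g) (hm : 2 ≤ m) : WMon g (m-1) 1 → ℕ := fun p =>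
  (∑ x ∈ Finset.range (g-2) ×ˢ Finset.range (Xv g m + 1),
      (NwD g m x.1 x.2 * (2*g-2)) * (if mono2P g m hg hm x.1 x.2 = p then 1 else 0))
  + (∑ x ∈ Finset.range (g-2) ×ˢ Finset.range (Xv g m + 1),
      (NwD g m x.1 x.2) * (if mono2R g m hg hm x.1 x.2 = p then 1 else 0))

lemma obligation1 (g m : ℕ) (hg : 3 ≤ g) (hm : 2 ≤ m) (d : ℕ) (hd : d ≤ (2*g-2)*m) :
    (∑ p ∈ Finset.univ.filter (fun p : WMon g m 0 => zdeg p = d), c1 g m hg hm p)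
      = (2*g-1) * Sv g m := by
  unfold c1
  rw [Finset.sum_add_distrib, dsum_filter, dsum_filter]
  have e1 : ∀ x ∈ Finset.range ((2*g-2)*m + 1),
      (Sv g m * (2*g-2)) * (if zdeg (mono1P g m hg hm x) = d then 1 else 0)
        = (if x = d then Sv g m * (2*g-2) else 0) := by
    intro x hx
    rw [Finset.mem_range] at hx
    rw [zdeg_mono1P g m hg hm (by omega)]
    split_ifs <;> ring
  have e2 : ∀ x ∈ Finset.range ((2*g-2)*m + 1),
      (Sv g m) * (if zdeg (mono1R g m hg hm x) = d then 1 else 0)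
        = (if x = d then Sv g m else 0) := by
    intro x hx
    rw [Finset.mem_range] at hx
    rw [zdeg_mono1R g m hg hm (by omega)]
    split_ifs <;> ring
  rw [Finset.sum_congr rfl e1, Finset.sum_congr rfl e2,
    Finset.sum_ite_eq' _ d (fun _ => Sv g m * (2*g-2)),
    Finset.sum_ite_eq' _ d (fun _ => Sv g m),
    if_pos (Finset.mem_range.2 (by omega)), if_pos (Finset.mem_range.2 (by omega))]
  calc Sv g m * (2*g-2) + Sv g m = ((2*g-2) + 1) * Sv g m := by ring
    _ = (2*g-1) * Sv g m := by rw [show (2*g-2)+1 = 2*g-1 by omega]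

lemma obligation2 (g m : ℕ) (hg : 3 ≤ g) (hm : 2 ≤ m) (d : ℕ)
    (hd : d ≤ (2*g-2)*(m-1) + (g-3)) :
    (∑ p ∈ Finset.univ.filter (fun p : WMon g (m-1) 1 => zdeg p = d), c2 g m hg hm p)
      = (2*g-1) * Sv g m := by
  unfold c2
  rw [Finset.sum_add_distrib, dsum_filter, dsum_filter]
  have key : (∑ x ∈ Finset.range (g-2) ×ˢ Finset.range (Xv g m + 1),
      NwD g m x.1 x.2 * (if x.2 + x.1 = d then 1 else 0)) = Sv g m := by
    rw [Finset.sum_product, show g - 2 = Hv g + 1 from by unfold Hv; omega]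
    have hd' : d ≤ Xv g m + Hv g := by unfold Hv Xv at *; omega
    exact diag (Hv g) (Xv g m) d hd'
  have e1 : ∀ x ∈ Finset.range (g-2) ×ˢ Finset.range (Xv g m + 1),
      (NwD g m x.1 x.2 * (2*g-2)) * (if zdeg (mono2P g m hg hm x.1 x.2) = d then 1 else 0)
        = (2*g-2) * (NwD g m x.1 x.2 * (if x.2 + x.1 = d then 1 else 0)) := by
    intro x hx
    rw [Finset.mem_product, Finset.mem_range, Finset.mem_range] at hx
    rw [zdeg_mono2P g m hg hm (by omega) (by have h9 := hx.2; unfold Xv at h9; omega)]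
    ring
  have e2 : ∀ x ∈ Finset.range (g-2) ×ˢ Finset.range (Xv g m + 1),
      (NwD g m x.1 x.2) * (if zdeg (mono2R g m hg hm x.1 x.2) = d then 1 else 0)
        = NwD g m x.1 x.2 * (if x.2 + x.1 = d then 1 else 0) := by
    intro x hx
    rw [Finset.mem_product, Finset.mem_range, Finset.mem_range] at hx
    rw [zdeg_mono2R g m hg hm (by omega) (by have h9 := hx.2; unfold Xv at h9; omega)]
  rw [Finset.sum_congr rfl e1, Finset.sum_congr rfl e2, ← Finset.mul_sum, key]
  calc (2*g-2) * Sv g m + Sv g m = ((2*g-2) + 1) * Sv g m := by ring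
    _ = (2*g-1) * Sv g m := by rw [show (2*g-2)+1 = 2*g-1 by omega]

lemma occ1 (g m : ℕ) (hg : 3 ≤ g) (hm : 2 ≤ m) (i : Fin (2*g-1)) :
    (∑ p : WMon g m 0, c1 g m hg hm p * Multiset.count i p.1.1)
      = Sv g m * ((2*g-2)*(m*m) + m) := by
  unfold c1
  rw [Finset.sum_congr rfl (fun p _ => add_mul _ _ (Multiset.count i p.1.1)),
    Finset.sum_add_distrib,
    dsum_mul _ _ _ (fun p => Multiset.count i p.1.1),
    dsum_mul _ _ _ (fun p => Multiset.count i p.1.1)]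
  have e1 : ∀ d ∈ Finset.range ((2*g-2)*m + 1),
      (Sv g m * (2*g-2)) * Multiset.count i (mono1P g m hg hm d).1.1
        = Sv g m * ((2*g-2) * Multiset.count i (PM hg m d)) := fun d _ => by
    show (Sv g m * (2*g-2)) * Multiset.count i (PM hg m d) = _
    ring
  have e2 : ∀ d ∈ Finset.range ((2*g-2)*m + 1),
      (Sv g m) * Multiset.count i (mono1R g m hg hm d).1.1
        = Sv g m * Multiset.count i (RM hg m d) := fun d _ => rfl
  have e4 : ∀ d ∈ Finset.range ((2*g-2)*m + 1),
      Sv g m * ((2*g-2) * Multiset.count i (PM hg m d)) + Sv g m * Multiset.count i (RM hg m d)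
        = Sv g m * ((2*g-2) * Multiset.count i (PM hg m d) + Multiset.count i (RM hg m d)) :=
    fun d _ => by ring
  rw [Finset.sum_congr rfl e1, Finset.sum_congr rfl e2, ← Finset.sum_add_distrib,
    Finset.sum_congr rfl e4, ← Finset.mul_sum, crux1 hg (show 1 ≤ m by omega) i]

lemma occ2 (g m : ℕ) (hg : 3 ≤ g) (hm : 2 ≤ m) (i : Fin (2*g-1)) :
    (∑ p : WMon g (m-1) 1, c2 g m hg hm p * Multiset.count i p.1.1)
      = Kv g m * ((2*g-2)*((m-1)*(m-1)) + (m-1)) := by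
  unfold c2
  rw [Finset.sum_congr rfl (fun p _ => add_mul _ _ (Multiset.count i p.1.1)),
    Finset.sum_add_distrib,
    dsum_mul _ _ _ (fun p => Multiset.count i p.1.1),
    dsum_mul _ _ _ (fun p => Multiset.count i p.1.1), ← Finset.sum_add_distrib]
  have e1 : ∀ x ∈ Finset.range (g-2) ×ˢ Finset.range (Xv g m + 1),
      (NwD g m x.1 x.2 * (2*g-2)) * Multiset.count i (mono2P g m hg hm x.1 x.2).1.1
          + (NwD g m x.1 x.2) * Multiset.count i (mono2R g m hg hm x.1 x.2).1.1
        = NwD g m x.1 x.2 * ((2*g-2) * Multiset.count i (PM hg (m-1) x.2)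
            + Multiset.count i (RM hg (m-1) x.2)) := fun x _ => by
    show (NwD g m x.1 x.2 * (2*g-2)) * Multiset.count i (PM hg (m-1) x.2)
        + (NwD g m x.1 x.2) * Multiset.count i (RM hg (m-1) x.2) = _
    ring
  rw [Finset.sum_congr rfl e1, Finset.sum_product, Finset.sum_comm]
  have e3 : ∀ e ∈ Finset.range (Xv g m + 1),
      (∑ j ∈ Finset.range (g-2), NwD g m j e * ((2*g-2) * Multiset.count i (PM hg (m-1) e)
          + Multiset.count i (RM hg (m-1) e)))
        = Kv g m * ((2*g-2) * Multiset.count i (PM hg (m-1) e)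
            + Multiset.count i (RM hg (m-1) e)) := by
    intro e he
    rw [Finset.mem_range] at he
    rw [← Finset.sum_mul, show g - 2 = Hv g + 1 from by unfold Hv; omega]
    simp only [NwD]
    rw [colsum (Hv g) (Xv g m) e (by omega)]
    rfl
  rw [Finset.sum_congr rfl e3, ← Finset.mul_sum]
  have : (∑ e ∈ Finset.range (Xv g m + 1),
      ((2*g-2) * Multiset.count i (PM hg (m-1) e) + Multiset.count i (RM hg (m-1) e)))
      = (2*g-2)*((m-1)*(m-1)) + (m-1) := by
    have hX : Xv g m + 1 = (2*g-2)*(m-1) + 1 := rfl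
    rw [hX, crux1 hg (show 1 ≤ m-1 by omega) i]
  rw [this]

lemma occ3 (g m : ℕ) (hg : 3 ≤ g) (hm : 2 ≤ m) (j₀ : Fin (g-2)) :
    (∑ p : WMon g (m-1) 1, c2 g m hg hm p * Multiset.count j₀ p.2.1)
      = (2*g-1) * Rv g m := by
  unfold c2
  rw [Finset.sum_congr rfl (fun p _ => add_mul _ _ (Multiset.count j₀ p.2.1)),
    Finset.sum_add_distrib,
    dsum_mul _ _ _ (fun p => Multiset.count j₀ p.2.1),
    dsum_mul _ _ _ (fun p => Multiset.count j₀ p.2.1), ← Finset.sum_add_distrib]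
  have e1 : ∀ x ∈ Finset.range (g-2) ×ˢ Finset.range (Xv g m + 1),
      (NwD g m x.1 x.2 * (2*g-2)) * Multiset.count j₀ (mono2P g m hg hm x.1 x.2).2.1
          + (NwD g m x.1 x.2) * Multiset.count j₀ (mono2R g m hg hm x.1 x.2).2.1
        = (if x.1 = (j₀:ℕ) then ((2*g-2) + 1) * NwD g m x.1 x.2 else 0) := by
    intro x hx
    rw [Finset.mem_product, Finset.mem_range, Finset.mem_range] at hx
    show (NwD g m x.1 x.2 * (2*g-2)) * Multiset.count j₀ {yl hg x.1}
        + (NwD g m x.1 x.2) * Multiset.count j₀ {yl hg x.1} = _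
    rw [Multiset.count_singleton]
    have hiff : (j₀ = yl hg x.1) ↔ (x.1 = (j₀:ℕ)) := by
      rw [Fin.ext_iff, coe_yl hg (show x.1 ≤ g-3 by omega), eq_comm]
    rw [if_congr hiff rfl rfl]
    split_ifs <;> ring
  rw [Finset.sum_congr rfl e1, Finset.sum_product]
  have e2 : ∀ j ∈ Finset.range (g-2),
      (∑ e ∈ Finset.range (Xv g m + 1),
        (if j = (j₀:ℕ) then ((2*g-2) + 1) * NwD g m j e else 0))
        = (if j = (j₀:ℕ) then ((2*g-2)+1) * (∑ e ∈ Finset.range (Xv g m + 1), NwD g m j e) else 0) := by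
    intro j _
    split_ifs with h
    · rw [Finset.mul_sum]
    · exact Finset.sum_eq_zero fun _ _ => rfl
  rw [Finset.sum_congr rfl e2,
    Finset.sum_ite_eq' (Finset.range (g-2)) ((j₀:ℕ))
      (fun j => ((2*g-2)+1) * (∑ e ∈ Finset.range (Xv g m + 1), NwD g m j e)),
    if_pos (Finset.mem_range.2 j₀.isLt)]
  simp only [NwD]
  rw [rowsum (Hv g) (Xv g m) (j₀:ℕ) (show (j₀:ℕ) ≤ Hv g from by
    have := j₀.isLt; unfold Hv; omega)]
  rw [show (2*g-2)+1 = 2*g-1 by omega]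
  rfl

lemma bridgeK (g m : ℕ) : Kv g m * (Xv g m + 1) = (Xv g m + Hv g + 1) * Sv g m := by
  have h1 := Nat.add_one_mul_choose_eq (Xv g m + Hv g) (Hv g)
  have h2 := Nat.choose_succ_right_eq (Xv g m + Hv g + 1) (Hv g)
  rw [show Xv g m + Hv g + 1 - Hv g = Xv g m + 1 from by omega] at h2
  unfold Kv Sv
  rw [← h2, ← h1]

lemma bridgeR (g m : ℕ) : (Hv g + 1) * Rv g m = (Xv g m + Hv g + 1) * Sv g m := by
  have h1 := Nat.add_one_mul_choose_eq (Xv g m + Hv g) (Hv g)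
  have h3 : Nat.choose (Xv g m + Hv g + 1) (Hv g + 1) = Rv g m := by
    have h := Nat.choose_symm (show Hv g + 1 ≤ Xv g m + Hv g + 1 by omega)
    rw [show Xv g m + Hv g + 1 - (Hv g + 1) = Xv g m from by omega] at h
    unfold Rv
    exact h.symm
  unfold Sv
  rw [h1, h3, Nat.mul_comm]

end WimanPf

/-- Proposition 5.9. -/
theorem wiman_typeI_multibasis (g m : ℕ) (hg : 3 ≤ g) (hm : 2 ≤ m) :
    ∃ (c₁ : WMon g m 0 → ℕ) (c₂ : WMon g (m - 1) 1 → ℕ) (s : ℕ), 0 < s ∧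
      (∀ d : ℕ, d ≤ (2 * g - 2) * m →
        (∑ p ∈ Finset.univ.filter (fun p : WMon g m 0 => zdeg p = d), c₁ p) = s) ∧
      (∀ d : ℕ, d ≤ (2 * g - 2) * (m - 1) + (g - 3) →
        (∑ p ∈ Finset.univ.filter (fun p : WMon g (m - 1) 1 => zdeg p = d), c₂ p) = s) ∧
      (∀ i : Fin (2 * g - 1),
        (2 * (g : ℤ) - 1) *
          (((∑ p : WMon g m 0, c₁ p * Multiset.count i p.1.1 : ℕ) : ℤ) +
            ((∑ p : WMon g (m - 1) 1, c₂ p * Multiset.count i p.1.1 : ℕ) : ℤ)) =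
          (s : ℤ) * ((4 * (g : ℤ) - 4) * (m : ℤ) ^ 2 - (3 * (g : ℤ) - 3) * m + g)) ∧
      (∀ j : Fin (g - 2),
        ((g : ℤ) - 2) * ((∑ p : WMon g (m - 1) 1, c₂ p * Multiset.count j p.2.1 : ℕ) : ℤ) =
          (s : ℤ) * ((2 * (g : ℤ) - 2) * m - g)) := by
  refine ⟨WimanPf.c1 g m hg hm, WimanPf.c2 g m hg hm, (2*g-1) * WimanPf.Sv g m,
    ?_, ?_, ?_, ?_, ?_⟩
  · exact Nat.mul_pos (by omega) (Nat.choose_pos (Nat.le_add_left _ _))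
  · intro d hd
    exact WimanPf.obligation1 g m hg hm d hd
  · intro d hd
    exact WimanPf.obligation2 g m hg hm d hd
  · intro i
    rw [WimanPf.occ1 g m hg hm i, WimanPf.occ2 g m hg hm i]
    have hb0 : (2*g-2)*((m-1)*(m-1)) + (m-1) = (m-1)*(WimanPf.Xv g m + 1) := by
      unfold WimanPf.Xv; ring
    have hb1 : WimanPf.Kv g m * ((2*g-2)*((m-1)*(m-1)) + (m-1))
        = (m-1) * ((WimanPf.Xv g m + WimanPf.Hv g + 1) * WimanPf.Sv g m) := by
      rw [hb0, show WimanPf.Kv g m * ((m-1)*(WimanPf.Xv g m+1))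
          = (m-1)*(WimanPf.Kv g m * (WimanPf.Xv g m+1)) from by ring, WimanPf.bridgeK g m]
    rw [hb1]
    have cA : ((2*g-2 : ℕ) : ℤ) = 2*(g:ℤ) - 2 := by omega
    have cB : ((m-1 : ℕ) : ℤ) = (m:ℤ) - 1 := by omega
    have cG : ((2*g-1 : ℕ) : ℤ) = 2*(g:ℤ) - 1 := by omega
    have cC : ((WimanPf.Xv g m + WimanPf.Hv g + 1 : ℕ) : ℤ)
        = (2*(g:ℤ)-2) * ((m:ℤ)-1) + ((g:ℤ)-2) := by
      unfold WimanPf.Xv WimanPf.Hv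
      push_cast [cA, cB]
      omega
    push_cast [cA, cB, cG, cC]
    ring
  · intro j
    rw [WimanPf.occ3 g m hg hm j]
    have key := WimanPf.bridgeR g m
    have keyZ : ((WimanPf.Hv g + 1 : ℕ) : ℤ) * (WimanPf.Rv g m : ℤ)
        = ((WimanPf.Xv g m + WimanPf.Hv g + 1 : ℕ) : ℤ) * (WimanPf.Sv g m : ℤ) := by
      exact_mod_cast congrArg (fun t : ℕ => (t : ℤ)) key
    have cH : ((WimanPf.Hv g + 1 : ℕ) : ℤ) = (g:ℤ) - 2 := by
      unfold WimanPf.Hv; omega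
    have cA : ((2*g-2 : ℕ) : ℤ) = 2*(g:ℤ) - 2 := by omega
    have cB : ((m-1 : ℕ) : ℤ) = (m:ℤ) - 1 := by omega
    have cG : ((2*g-1 : ℕ) : ℤ) = 2*(g:ℤ) - 1 := by omega
    have cC : ((WimanPf.Xv g m + WimanPf.Hv g + 1 : ℕ) : ℤ)
        = (2*(g:ℤ)-2) * ((m:ℤ)-1) + ((g:ℤ)-2) := by
      unfold WimanPf.Xv WimanPf.Hv
      push_cast [cA, cB]
      omega
    rw [cH, cC] at keyZ
    push_cast [cG]
    linear_combination (2*(g:ℤ)-1) * keyZ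
end
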